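/- arXiv:2310.09086 — 6 statements merged into one kernel-verified Lean document; each statement's English description precedes it below -/
import Mathlib

section
/- The number of Laplacian eigenvalues of the path graph P_n lying in the interval [0,1) equals ⌈n/3⌉. -/
open SimpleGraph Matrix Polynomial

/-- The Laplacian matrix of a simple graph over `ℝ`. -/
noncomputable def lapR {V : Type} [Fintype V] [DecidableEq V] (G : SimpleGraph V) :
    Matrix V V ℝ :=
  letI := Classical.decRel G.Adj
  G.lapMatrix ℝ

/-- The multiset of Laplacian eigenvalues of a graph, counted with multiplicity,
given as the roots of the characteristic polynomial of the Laplacian matrix. -/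
noncomputable def lapEigs {V : Type} [Fintype V] [DecidableEq V] (G : SimpleGraph V) :
    Multiset ℝ :=
  (lapR G).charpoly.roots

/-- `m_G[0,1)`: the number of Laplacian eigenvalues of `G` in `[0,1)`, with multiplicity. -/
noncomputable def mIco01 {V : Type} [Fintype V] [DecidableEq V] (G : SimpleGraph V) : ℕ :=
  letI : DecidablePred (fun x : ℝ => 0 ≤ x ∧ x < 1) := Classical.decPred _
  Multiset.card ((lapEigs G).filter (fun x => 0 ≤ x ∧ x < 1))

/-- `m_G(μ)`: the multiplicity of `μ` as a Laplacian eigenvalue of `G`. -/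
noncomputable def mEig {V : Type} [Fintype V] [DecidableEq V] (G : SimpleGraph V) (μ : ℝ) : ℕ :=
  Multiset.count μ (lapEigs G)


lemma charpoly_eval' {m : Type} [Fintype m] [DecidableEq m] (M : Matrix m m ℝ) (r : ℝ) :
    M.charpoly.eval r = (r • (1 : Matrix m m ℝ) - M).det := by
  rw [Matrix.charpoly, ← Polynomial.coe_evalRingHom, RingHom.map_det]
  congr 1
  ext i j
  by_cases h : i = j
  · subst h
    simp [Matrix.charmatrix_apply_eq, Matrix.one_apply_eq]
  · simp [Matrix.charmatrix_apply_ne _ _ _ h, Matrix.one_apply_ne h]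

instance pathDec (n : ℕ) : DecidableRel (pathGraph n).Adj :=
  fun u v => decidable_of_iff _ pathGraph_adj.symm

lemma lapR_pathGraph (n : ℕ) : lapR (pathGraph n) = (pathGraph n).lapMatrix ℝ := by
  unfold lapR
  congr!
noncomputable def mu (n k : ℕ) : ℝ := 2 - 2 * Real.cos (k * Real.pi / n)

lemma cos_core (A t : ℝ) :
    Real.cos (A - 2*t) + Real.cos (A + 2*t) = 2 * Real.cos (2*t) * Real.cos A := by
  rw [Real.cos_sub, Real.cos_add]; ring

lemma eigen_key {n k : ℕ} (hk : k < n) :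
    ∃ v : Fin n → ℝ, v ≠ 0 ∧ (pathGraph n).lapMatrix ℝ *ᵥ v = mu n k • v := by
  have hn : 0 < n := lt_of_le_of_lt (Nat.zero_le k) hk
  have hnR : (0:ℝ) < n := by exact_mod_cast hn
  set t : ℝ := k * Real.pi / (2 * n) with ht
  have h2t : 2 * t = k * Real.pi / n := by
    rw [ht]; field_simp
  set vv : ℕ → ℝ := fun m => Real.cos ((2 * m + 1) * t) with hvv
  refine ⟨fun j => vv j.val, ?_, ?_⟩
  · intro h
    have h0 : vv 0 = 0 := congrFun h ⟨0, hn⟩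
    have hc : Real.cos t = 0 := by simpa [hvv] using h0
    have htpos : 0 ≤ t := div_nonneg (by positivity) (by positivity)
    have htlt : t < Real.pi / 2 := by
      rw [ht, div_lt_div_iff₀ (by positivity) (by norm_num)]
      have hpi := Real.pi_pos
      have : (k:ℝ) < n := by exact_mod_cast hk
      nlinarith
    have := Real.cos_pos_of_mem_Ioo (x := t) ⟨by linarith [Real.pi_pos], htlt⟩
    linarith
  · funext j
    rw [lapMatrix_mulVec_apply]
    simp only [Pi.smul_apply, smul_eq_mul, mu, ← h2t]
    have hrec : ∀ m : ℕ, vv m + vv (m + 2) = 2 * Real.cos (2*t) * vv (m+1) := by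
      intro m
      have h := cos_core ((2 * (m+1) + 1) * t) t
      simp only [hvv]
      push_cast
      convert h using 3 <;> ring
    have hb0 : vv 0 + vv 1 = 2 * Real.cos (2*t) * vv 0 := by
      have h := cos_core t t
      rw [show t - 2*t = -t by ring, Real.cos_neg] at h
      simp only [hvv]
      push_cast
      convert h using 3 <;> ring
    have hwrap : vv n = vv (n-1) := by
      have hcast : ((n-1:ℕ):ℝ) = (n:ℝ) - 1 := by
        push_cast [Nat.cast_sub hn]; ring
      simp only [hvv, hcast]
      have harg : (2 * (n:ℝ) + 1) * t = k * (2 * Real.pi) - (2 * ((n:ℝ)-1) + 1) * t := by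
        have h4 : (4 * (n:ℝ)) * t = k * (2 * Real.pi) := by
          rw [ht]; field_simp; ring
        linarith [h4]
      rw [harg, Real.cos_nat_mul_two_pi_sub]
    by_cases h1 : n = 1
    · subst h1
      have hnb : (pathGraph 1).neighborFinset j = ∅ := by
        ext u
        simp only [SimpleGraph.mem_neighborFinset, pathGraph_adj, Finset.notMem_empty, iff_false]
        omega
      have hdeg : (pathGraph 1).degree j = 0 := by
        rw [SimpleGraph.degree, hnb, Finset.card_empty]
      rw [hdeg, hnb, Finset.sum_empty]
      have hj : (j : ℕ) = 0 := by omega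
      rw [hj]
      interval_cases k
      have h0 : 2*t = 0 := by rw [ht]; push_cast; ring
      rw [h0, Real.cos_zero]
      push_cast; ring
    · have hn2 : 2 ≤ n := by omega
      by_cases hj0 : (j : ℕ) = 0
      · have hnb : (pathGraph n).neighborFinset j = {(⟨1, by omega⟩ : Fin n)} := by
          ext u
          simp only [SimpleGraph.mem_neighborFinset, pathGraph_adj, Finset.mem_singleton,
            Fin.ext_iff, hj0]
          omega
        have hdeg : (pathGraph n).degree j = 1 := by
          rw [SimpleGraph.degree, hnb, Finset.card_singleton]
        rw [hdeg, hnb, Finset.sum_singleton, hj0]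
        push_cast
        linarith [hb0]
      · by_cases hjn : (j : ℕ) = n - 1
        · have hnb : (pathGraph n).neighborFinset j = {(⟨n-2, by omega⟩ : Fin n)} := by
            ext u
            simp only [SimpleGraph.mem_neighborFinset, pathGraph_adj, Finset.mem_singleton,
              Fin.ext_iff, hjn]
            omega
          have hdeg : (pathGraph n).degree j = 1 := by
            rw [SimpleGraph.degree, hnb, Finset.card_singleton]
          rw [hdeg, hnb, Finset.sum_singleton, hjn]
          have h := hrec (n-2)
          rw [show n-2+2 = n by omega, show n-2+1 = n-1 by omega, hwrap] at h
          push_cast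
          linarith [h]
        · have hjlt : (j : ℕ) + 1 < n := by omega
          have hjge : 1 ≤ (j : ℕ) := by omega
          have hne : (⟨(j:ℕ)-1, by omega⟩ : Fin n) ≠ ⟨(j:ℕ)+1, by omega⟩ := by
            simp only [ne_eq, Fin.mk.injEq]; omega
          have hnb : (pathGraph n).neighborFinset j =
              {(⟨(j:ℕ)-1, by omega⟩ : Fin n), ⟨(j:ℕ)+1, by omega⟩} := by
            ext u
            simp only [SimpleGraph.mem_neighborFinset, pathGraph_adj, Finset.mem_insert,
              Finset.mem_singleton, Fin.ext_iff]
            omega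
          have hdeg : (pathGraph n).degree j = 2 := by
            rw [SimpleGraph.degree, hnb, Finset.card_pair hne]
          rw [hdeg, hnb, Finset.sum_pair hne]
          have h := hrec ((j:ℕ)-1)
          rw [show (j:ℕ)-1+2 = (j:ℕ)+1 by omega, show (j:ℕ)-1+1 = (j:ℕ) by omega] at h
          push_cast
          linarith [h]
lemma mu_root {n k : ℕ} (hk : k < n) : (lapR (pathGraph n)).charpoly.IsRoot (mu n k) := by
  obtain ⟨v, hv, heq⟩ := eigen_key hk
  rw [Polynomial.IsRoot, lapR_pathGraph, charpoly_eval']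
  rw [← Matrix.exists_mulVec_eq_zero_iff]
  exact ⟨v, hv, by rw [Matrix.sub_mulVec, Matrix.smul_mulVec, Matrix.one_mulVec, heq,
    sub_self]⟩

lemma mu_lt_mu {n k l : ℕ} (hkl : k < l) (hl : l < n) : mu n k < mu n l := by
  have hn : (0:ℝ) < n := by
    have : 0 < n := by omega
    exact_mod_cast this
  have hpi := Real.pi_pos
  have hklR : (k:ℝ) < l := by exact_mod_cast hkl
  have hlR : (l:ℝ) < n := by exact_mod_cast hl
  have h1 : (k:ℝ) * Real.pi / n < l * Real.pi / n := by
    apply div_lt_div_of_pos_right ?_ hn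
    nlinarith
  have hk0 : (0:ℝ) ≤ k * Real.pi / n := by positivity
  have hlpi : (l:ℝ) * Real.pi / n ≤ Real.pi := by
    rw [div_le_iff₀ hn]
    nlinarith
  have hc := Real.strictAntiOn_cos ⟨hk0, by linarith⟩ ⟨by positivity, hlpi⟩ h1
  simp only [mu]
  linarith

lemma lapEigs_pathGraph (n : ℕ) :
    lapEigs (pathGraph n) = (Multiset.range n).map (mu n) := by
  have hmono : Monic (lapR (pathGraph n)).charpoly := Matrix.charpoly_monic _
  have hne : (lapR (pathGraph n)).charpoly ≠ 0 := hmono.ne_zero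
  have h1 : (Multiset.range n).map (mu n) ≤ lapEigs (pathGraph n) := by
    rw [Multiset.le_iff_subset]
    · intro x hx
      rw [Multiset.mem_map] at hx
      obtain ⟨k, hk, rfl⟩ := hx
      rw [Multiset.mem_range] at hk
      rw [lapEigs, Polynomial.mem_roots hne]
      exact mu_root hk
    · refine Multiset.Nodup.map_on ?_ (Multiset.nodup_range n)
      intro x hx y hy hxy
      rw [Multiset.mem_range] at hx hy
      by_contra hne2
      rcases Nat.lt_or_ge x y with h | h
      · exact absurd hxy (ne_of_lt (mu_lt_mu h hy))
      · exact absurd hxy.symm (ne_of_lt (mu_lt_mu (by omega) hx))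
  have h2 : Multiset.card (lapEigs (pathGraph n)) ≤
      Multiset.card ((Multiset.range n).map (mu n)) := by
    rw [Multiset.card_map, Multiset.card_range, lapEigs]
    calc Multiset.card (lapR (pathGraph n)).charpoly.roots
        ≤ (lapR (pathGraph n)).charpoly.natDegree := Polynomial.card_roots' _
      _ = n := by rw [Matrix.charpoly_natDegree_eq_dim, Fintype.card_fin]
  exact (Multiset.eq_of_le_of_card_le h1 h2).symm
lemma mu_nonneg (n k : ℕ) : 0 ≤ mu n k := by
  have := Real.cos_le_one ((k:ℝ) * Real.pi / n)
  simp only [mu]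
  linarith

lemma mu_lt_one_iff {n k : ℕ} (hk : k < n) : mu n k < 1 ↔ 3 * k < n := by
  have hn : (0:ℝ) < n := by
    have : 0 < n := by omega
    exact_mod_cast this
  have hpi := Real.pi_pos
  have hkR : (k:ℝ) < n := by exact_mod_cast hk
  set θ : ℝ := (k:ℝ) * Real.pi / n with hθ
  have hθ0 : 0 ≤ θ := by positivity
  have hθpi : θ < Real.pi := by
    rw [hθ, div_lt_iff₀ hn]
    nlinarith
  constructor
  · intro h
    by_contra h3
    push_neg at h3
    have h3R : (n:ℝ) ≤ 3 * k := by exact_mod_cast h3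
    have hθge : Real.pi / 3 ≤ θ := by
      rw [hθ, le_div_iff₀ hn]
      nlinarith
    have := Real.cos_le_cos_of_nonneg_of_le_pi (by positivity) (le_of_lt hθpi) hθge
    rw [Real.cos_pi_div_three] at this
    simp only [mu, ← hθ] at h
    linarith
  · intro h3
    have h3R : 3 * (k:ℝ) < n := by exact_mod_cast h3
    have hθlt : θ < Real.pi / 3 := by
      rw [hθ, div_lt_div_iff₀ hn (by norm_num)]
      nlinarith
    have := Real.strictAntiOn_cos ⟨hθ0, by linarith⟩
      ⟨by positivity, by linarith [Real.pi_pos]⟩ hθlt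
    rw [Real.cos_pi_div_three] at this
    simp only [mu, ← hθ]
    linarith

lemma mIco01_pathGraph (n : ℕ) : mIco01 (pathGraph n) = (n + 2) / 3 := by
  rw [mIco01, lapEigs_pathGraph, Multiset.filter_map, Multiset.card_map]
  have hpq : ∀ x ∈ Multiset.range n,
      (((fun x : ℝ => 0 ≤ x ∧ x < 1) ∘ mu n) x ↔ 3 * x < n) := by
    intro k hk
    rw [Multiset.mem_range] at hk
    simp only [Function.comp_apply]
    exact ⟨fun h => (mu_lt_one_iff hk).mp h.2, fun h => ⟨mu_nonneg n k, (mu_lt_one_iff hk).mpr h⟩⟩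
  convert_to Multiset.card (Multiset.filter (fun k => 3 * k < n) (Multiset.range n)) = (n+2)/3
    using 2
  · exact @Multiset.filter_congr ℕ ((fun x : ℝ => 0 ≤ x ∧ x < 1) ∘ mu n) (fun k => 3 * k < n)
      (fun a => @instDecidablePredComp_batteries ℕ ℝ (fun x => 0 ≤ x ∧ x < 1) (mu n)
        (Classical.decPred fun x => 0 ≤ x ∧ x < 1) a)
      (fun k => Nat.decLt _ _) (Multiset.range n) hpq
  have hrange : Multiset.range n = (Finset.range n).val := rfl
  rw [hrange, ← Finset.filter_val, Finset.card_val]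
  have hfr : Finset.filter (fun k => 3 * k < n) (Finset.range n) = Finset.range ((n+2)/3) := by
    ext k
    simp only [Finset.mem_filter, Finset.mem_range]
    omega
  rw [hfr, Finset.card_range]

theorem path_count_eigenvalues_Ico' (n : ℕ) :
    (mIco01 (pathGraph n) : ℤ) = ⌈(n : ℚ) / 3⌉ := by
  rw [mIco01_pathGraph]
  obtain ⟨m, hm⟩ : ∃ m, (n + 2) / 3 = m := ⟨_, rfl⟩
  rw [hm]
  have h1 : n ≤ 3 * m := by omega
  have h2 : 3 * m < n + 3 := by omega
  have h1R : (n:ℚ) ≤ 3 * m := by exact_mod_cast h1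
  have h2R : 3 * (m:ℚ) < n + 3 := by exact_mod_cast h2
  symm
  rw [Int.ceil_eq_iff]
  constructor
  · push_cast
    linarith
  · push_cast
    linarith

/-- The number of Laplacian eigenvalues of the path graph `P_n` in `[0,1)` is `⌈n/3⌉`. -/
theorem path_count_eigenvalues_Ico (n : ℕ) :
    (mIco01 (pathGraph n) : ℤ) = ⌈(n : ℚ) / 3⌉ := by
  exact path_count_eigenvalues_Ico' n
end

section
/- The number of Laplacian eigenvalues of the cycle graph C_n lying in the interval [0,1) equals 2⌈n/6⌉ - 1. -/
open SimpleGraph Matrix Polynomial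

private lemma charmatrix_eq' {m : Type*} [Fintype m] [DecidableEq m] {K : Type*} [CommRing K]
    (M : Matrix m m K) : charmatrix M = (X : K[X]) • (1 : Matrix m m K[X]) - M.map C := by
  ext i j
  rw [charmatrix_apply]
  by_cases h : i = j <;>
    simp [h, Matrix.sub_apply, Matrix.map_apply, Matrix.smul_apply, Matrix.one_apply]

private lemma charpoly_of_mul_eq' {m : Type*} [Fintype m] [DecidableEq m] {K : Type*} [Field K]
    (A P D : Matrix m m K) (hP : P.det ≠ 0) (h : A * P = P * D) :
    A.charpoly = D.charpoly := by
  have key : charmatrix A * P.map C = P.map C * charmatrix D := by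
    rw [charmatrix_eq', charmatrix_eq', sub_mul, mul_sub, smul_mul_assoc, one_mul,
      mul_smul_comm, mul_one, ← Matrix.map_mul, ← Matrix.map_mul, h]
  have hd := congrArg Matrix.det key
  rw [Matrix.det_mul, Matrix.det_mul, mul_comm (charmatrix A).det] at hd
  have hPC : (P.map C).det ≠ 0 := by
    have h2 := RingHom.map_det (C : K →+* K[X]) P
    rw [RingHom.mapMatrix_apply] at h2
    rw [← h2]
    simpa using hP
  unfold Matrix.charpoly
  exact mul_left_cancel₀ hPC hd

private lemma charpoly_diagonal' {m : Type*} [Fintype m] [DecidableEq m] {K : Type*} [CommRing K]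
    (d : m → K) : (Matrix.diagonal d).charpoly = ∏ i, (X - C (d i)) := by
  unfold Matrix.charpoly
  have : charmatrix (Matrix.diagonal d) = Matrix.diagonal (fun i => X - C (d i)) := by
    ext i j
    by_cases h : i = j
    · subst h; simp [charmatrix_apply_eq]
    · simp [charmatrix_apply_ne _ _ _ h, Matrix.diagonal_apply_ne _ h]
  rw [this, Matrix.det_diagonal]

private lemma cycle_charpolyR (n : ℕ) (hn : 3 ≤ n) :
    ((cycleGraph n).lapMatrix ℝ).charpoly
      = ∏ k : Fin n, (X - C (2 - 2 * Real.cos (2 * Real.pi * (k : ℕ) / n))) := by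
  obtain ⟨m, rfl⟩ : ∃ m, n = m + 3 := ⟨n - 3, by omega⟩
  set n := m + 3 with hn3
  have hn0 : n ≠ 0 := by omega
  set ω : ℂ := Complex.exp (2 * Real.pi * Complex.I / n) with hω
  have hprim : IsPrimitiveRoot ω n := Complex.isPrimitiveRoot_exp n hn0
  have hω1 : ω ^ n = 1 := hprim.pow_eq_one
  have hcongr : ∀ a b : ℕ, a % n = b % n → ω ^ a = ω ^ b := fun a b hab => by
    rw [pow_eq_pow_mod a hω1, pow_eq_pow_mod b hω1, hab]
  set P : Matrix (Fin n) (Fin n) ℂ := Matrix.of fun j k => ω ^ ((j : ℕ) * (k : ℕ)) with hP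
  have hdet : P.det ≠ 0 := by
    have hv : P = Matrix.vandermonde (fun i : Fin n => ω ^ (i : ℕ)) := by
      ext i j
      simp [hP, Matrix.vandermonde, ← pow_mul]
    rw [hv, Matrix.det_vandermonde_ne_zero_iff]
    intro i j hij
    exact Fin.ext (hprim.pow_inj i.isLt j.isLt hij)
  set μC : Fin n → ℂ := fun k => 2 - ω ^ (k : ℕ) - ω ^ (n - (k : ℕ)) with hμC
  -- the eigenvector equation
  have hmul : (cycleGraph n).lapMatrix ℂ * P = P * Matrix.diagonal μC := by
    ext j k
    have hdeg : (cycleGraph n).degree j = 2 := cycleGraph_degree_three_le (n := m)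
    have hne : (j - 1 : Fin n) ≠ j + 1 := by
      intro h
      have h2 : j + (1 + 1) = j := by
        rw [← add_assoc, ← h, sub_add_cancel]
      have h3 : (1 + 1 : Fin n) = 0 := add_eq_left.mp h2
      have h4 : ((1 + 1 : Fin n) : ℕ) = 2 := by
        rw [Fin.val_add, Fin.val_one, Nat.mod_eq_of_lt (by omega)]
      rw [h3] at h4
      simp at h4
    have h1 : P (j + 1) k = ω ^ ((j : ℕ) * (k : ℕ)) * ω ^ (k : ℕ) := by
      show ω ^ (((j + 1 : Fin n) : ℕ) * (k : ℕ)) = _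
      rw [← pow_add]
      apply hcongr
      calc (((j + 1 : Fin n) : ℕ) * (k : ℕ)) % n
          = (((j : ℕ) + 1) % n * (k : ℕ)) % n := by rw [Fin.val_add, Fin.val_one]
        _ = (((j : ℕ) + 1) * (k : ℕ)) % n := (Nat.mod_modEq _ n).mul_right _
        _ = ((j : ℕ) * (k : ℕ) + (k : ℕ)) % n := by rw [Nat.add_mul, one_mul]
    have h2 : P (j - 1) k = ω ^ ((j : ℕ) * (k : ℕ)) * ω ^ (n - (k : ℕ)) := by
      show ω ^ (((j - 1 : Fin n) : ℕ) * (k : ℕ)) = _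
      rw [← pow_add]
      apply hcongr
      have hsub : ((j - 1 : Fin n) : ℕ) = ((j : ℕ) + (n - 1)) % n := by
        rw [Fin.sub_def]
        simp [Fin.val_one, Nat.add_comm]
        rw [Nat.mod_eq_of_lt (show 1 < n by omega)]
      have hmod : ((n - 1) * (k : ℕ)) % n = (n - (k : ℕ)) % n := by
        apply Nat.ModEq.add_right_cancel' (k : ℕ)
        have e1 : (n - 1) * (k : ℕ) + (k : ℕ) = n * (k : ℕ) := by
          have : (k : ℕ) ≤ n * (k : ℕ) := Nat.le_mul_of_pos_left _ (by omega)
          rw [Nat.sub_mul, one_mul]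
          omega
        have e2 : (n - (k : ℕ)) + (k : ℕ) = n := by
          have := k.isLt
          omega
        rw [e1, e2]
        show (n * (k : ℕ)) % n = n % n
        simp [Nat.mul_mod_right, Nat.mod_self]
      calc (((j - 1 : Fin n) : ℕ) * (k : ℕ)) % n
          = (((j : ℕ) + (n - 1)) % n * (k : ℕ)) % n := by rw [hsub]
        _ = (((j : ℕ) + (n - 1)) * (k : ℕ)) % n := (Nat.mod_modEq _ n).mul_right _
        _ = ((j : ℕ) * (k : ℕ) + (n - 1) * (k : ℕ)) % n := by rw [Nat.add_mul]
        _ = ((j : ℕ) * (k : ℕ) + (n - (k : ℕ))) % n := by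
            rw [Nat.add_mod, hmod, ← Nat.add_mod]
    rw [SimpleGraph.lapMatrix, Matrix.sub_mul, Matrix.sub_apply, SimpleGraph.degMatrix,
      Matrix.diagonal_mul, SimpleGraph.adjMatrix_mul_apply, Matrix.mul_diagonal,
      show (cycleGraph n).neighborFinset j = {j - 1, j + 1} from cycleGraph_neighborFinset,
      Finset.sum_pair hne, hdeg, h1, h2]
    show ((2 : ℕ) : ℂ) * ω ^ ((j : ℕ) * (k : ℕ)) - _ = ω ^ ((j : ℕ) * (k : ℕ)) * μC k
    rw [hμC]
    push_cast
    ring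
  -- charpoly over ℂ
  have hcharC : ((cycleGraph n).lapMatrix ℂ).charpoly = ∏ k : Fin n, (X - C (μC k)) := by
    rw [charpoly_of_mul_eq' _ P _ hdet hmul, charpoly_diagonal']
  -- identify μC with the real eigenvalue
  have hcos : ∀ θ : ℝ, ((2 - 2 * Real.cos θ : ℝ) : ℂ)
      = 2 - Complex.exp ((θ : ℂ) * Complex.I) - Complex.exp (-((θ : ℂ) * Complex.I)) := by
    intro θ
    push_cast [Complex.ofReal_cos]
    rw [Complex.cos]
    ring
  have hμ : ∀ k : Fin n, ((2 - 2 * Real.cos (2 * Real.pi * (k : ℕ) / n) : ℝ) : ℂ) = μC k := by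
    intro k
    have hkn : (k : ℕ) ≤ n := k.isLt.le
    have hnC : (n : ℂ) ≠ 0 := Nat.cast_ne_zero.mpr hn0
    have e1 : ω ^ (k : ℕ)
        = Complex.exp (((2 * Real.pi * (k : ℕ) / n : ℝ) : ℂ) * Complex.I) := by
      rw [← Complex.exp_nat_mul]
      congr 1
      push_cast
      field_simp
    have e2 : ω ^ (n - (k : ℕ))
        = Complex.exp (-(((2 * Real.pi * (k : ℕ) / n : ℝ) : ℂ) * Complex.I)) := by
      rw [← Complex.exp_nat_mul]
      have hcan : ((n : ℕ) : ℂ) * (2 * (Real.pi : ℂ) * Complex.I / ((n : ℕ) : ℂ))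
          = 2 * (Real.pi : ℂ) * Complex.I := by
        field_simp
      have harg : ((n - (k : ℕ) : ℕ) : ℂ) * (2 * (Real.pi : ℂ) * Complex.I / (n : ℂ))
          = 2 * (Real.pi : ℂ) * Complex.I
            + -(((2 * Real.pi * (k : ℕ) / n : ℝ) : ℂ) * Complex.I) := by
        rw [Nat.cast_sub hkn, sub_mul, hcan, sub_eq_add_neg]
        congr 2
        push_cast
        ring
      rw [harg, Complex.exp_add, Complex.exp_two_pi_mul_I, one_mul]
    rw [hcos]
    simp only [hμC]
    rw [e1, e2]
  -- move back to ℝ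
  have hmapC : ((cycleGraph n).lapMatrix ℝ).map (Complex.ofRealHom : ℝ →+* ℂ)
      = (cycleGraph n).lapMatrix ℂ := by
    ext i j
    simp [SimpleGraph.lapMatrix, SimpleGraph.degMatrix, SimpleGraph.adjMatrix,
      Matrix.map_apply, Matrix.sub_apply, Matrix.diagonal, Matrix.of_apply]
    split_ifs <;> simp
  apply Polynomial.map_injective (Complex.ofRealHom : ℝ →+* ℂ) Complex.ofReal_injective
  rw [← Matrix.charpoly_map _ (Complex.ofRealHom : ℝ →+* ℂ), hmapC, hcharC,
    Polynomial.map_prod]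
  apply Finset.prod_congr rfl
  intro k _
  rw [Polynomial.map_sub, Polynomial.map_X, Polynomial.map_C, ← hμ k]
  rfl

private lemma aux_cos_lt (n k : ℕ) (hn : 3 ≤ n) (h2 : 2 * k ≤ n) :
    (1/2 < Real.cos (2 * Real.pi * k / n) ↔ 6 * k < n) := by
  have hπ := Real.pi_pos
  have hn0 : (0:ℝ) < n := by
    have : 0 < n := by omega
    exact_mod_cast this
  have h2' : 2 * (k:ℝ) ≤ n := by exact_mod_cast h2
  set θ : ℝ := 2 * Real.pi * k / n with hθ
  have hθ0 : 0 ≤ θ := by positivity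
  have hθπ : θ ≤ Real.pi := by
    rw [hθ, div_le_iff₀ hn0]
    nlinarith
  constructor
  · intro h
    by_contra hc
    push_neg at hc
    have hc' : (n:ℝ) ≤ 6 * k := by exact_mod_cast hc
    have hle : Real.pi/3 ≤ θ := by
      rw [hθ, div_le_div_iff₀ (by norm_num) hn0]
      nlinarith
    have := Real.cos_le_cos_of_nonneg_of_le_pi (by positivity) hθπ hle
    rw [Real.cos_pi_div_three] at this
    linarith
  · intro h
    have h' : 6 * (k:ℝ) < n := by exact_mod_cast h
    have hlt : θ < Real.pi/3 := by
      rw [hθ, div_lt_div_iff₀ hn0 (by norm_num)]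
      nlinarith
    have := Real.cos_lt_cos_of_nonneg_of_le_pi hθ0 (by linarith) hlt
    rw [Real.cos_pi_div_three] at this
    linarith

private lemma cos_iff (n k : ℕ) (hn : 3 ≤ n) (hk : k < n) :
    (1/2 < Real.cos (2 * Real.pi * k / n) ↔ (6 * k < n ∨ 5 * n < 6 * k)) := by
  have hn0 : (n:ℝ) ≠ 0 := by
    have : 0 < n := by omega
    positivity
  rcases le_or_gt (2*k) n with h2 | h2
  · rw [aux_cos_lt n k hn h2]
    constructor
    · exact Or.inl
    · rintro (h | h)
      · exact h
      · omega
  · set j := n - k with hj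
    have hjn : (j:ℝ) = (n:ℝ) - k := by
      rw [hj]
      exact_mod_cast Nat.cast_sub hk.le
    have hcos_eq : Real.cos (2 * Real.pi * k / n) = Real.cos (2 * Real.pi * j / n) := by
      have harg : (2 * Real.pi * k / n : ℝ) = 2 * Real.pi - 2 * Real.pi * j / n := by
        rw [show (k:ℝ) = (n:ℝ) - j from by linarith]
        field_simp
      rw [harg, Real.cos_two_pi_sub]
    rw [hcos_eq, aux_cos_lt n j hn (by omega)]
    omega

private lemma count_arith (n : ℕ) (hn : 3 ≤ n) :
    (((Finset.univ.filter (fun k : Fin n => 6 * (k:ℕ) < n ∨ 5 * n < 6 * (k:ℕ))).card : ℤ))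
      = 2 * ⌈(n:ℚ)/6⌉ - 1 := by
  have hceil : ⌈(n:ℚ)/6⌉ = (((n+5)/6 : ℕ) : ℤ) := by
    rw [Int.ceil_eq_iff]
    have h1 : n ≤ 6 * ((n+5)/6) := by omega
    have h2 : 6 * ((n+5)/6) ≤ n + 5 := by omega
    have h1' : (n:ℚ) ≤ 6 * (((n+5)/6 : ℕ) : ℚ) := by exact_mod_cast h1
    have h2' : 6 * (((n+5)/6 : ℕ) : ℚ) ≤ (n:ℚ) + 5 := by exact_mod_cast h2
    have hcc : (((((n+5)/6 : ℕ) : ℤ)) : ℚ) = (((n+5)/6 : ℕ) : ℚ) := by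
      norm_cast
    constructor
    · rw [hcc, lt_div_iff₀ (by norm_num : (0:ℚ) < 6)]
      linarith
    · rw [hcc, div_le_iff₀ (by norm_num : (0:ℚ) < 6)]
      linarith
  have hcard : (Finset.univ.filter (fun k : Fin n => 6 * (k:ℕ) < n ∨ 5 * n < 6 * (k:ℕ))).card
      = (n+5)/6 + (n - (5*n/6 + 1)) := by
    rw [Finset.card_filter,
      Fin.sum_univ_eq_sum_range (fun i => if 6 * i < n ∨ 5 * n < 6 * i then 1 else 0),
      ← Finset.card_filter, Finset.filter_or, Finset.card_union_of_disjoint]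
    · congr 1
      · rw [show (Finset.range n).filter (fun k => 6 * k < n) = Finset.range ((n+5)/6) from by
          ext x
          simp only [Finset.mem_filter, Finset.mem_range]
          omega]
        exact Finset.card_range _
      · rw [show (Finset.range n).filter (fun k => 5 * n < 6 * k)
            = Finset.Ico (5*n/6 + 1) n from by
          ext x
          simp only [Finset.mem_filter, Finset.mem_range, Finset.mem_Ico]
          omega]
        exact Nat.card_Ico _ _
    · rw [Finset.disjoint_left]
      intro a ha hb
      simp only [Finset.mem_filter, Finset.mem_range] at ha hb
      omega
  rw [hcard, hceil]
  push_cast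
  omega

private lemma countP_map_card {α β : Type*} (f : α → β) (s : Multiset α) (p : β → Prop)
    [DecidablePred p] [DecidablePred fun a => p (f a)] :
    Multiset.countP p (Multiset.map f s) = Multiset.card (s.filter fun a => p (f a)) := by
  rw [Multiset.countP_map]
  have h : ∀ (i1 i2 : DecidablePred fun a => p (f a)),
      @Multiset.filter α (fun a => p (f a)) i1 s = @Multiset.filter α (fun a => p (f a)) i2 s := by
    intro i1 i2
    have hii : i1 = i2 := funext fun a => Subsingleton.elim _ _
    rw [hii]
  exact congrArg Multiset.card (h _ _)

/-- The number of Laplacian eigenvalues of the cycle graph `C_n` in `[0,1)` is `2⌈n/6⌉ - 1`. -/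
theorem cycle_count_eigenvalues_Ico (n : ℕ) (hn : 3 ≤ n) :
    (mIco01 (cycleGraph n) : ℤ) = 2 * ⌈(n : ℚ) / 6⌉ - 1 := by
  classical
  have hlapR : lapR (cycleGraph n) = (cycleGraph n).lapMatrix ℝ := by
    unfold lapR
    congr!
  have heigs : lapEigs (cycleGraph n)
      = Finset.univ.val.map (fun k : Fin n => 2 - 2 * Real.cos (2 * Real.pi * (k:ℕ) / n)) := by
    unfold lapEigs
    rw [hlapR, cycle_charpolyR n hn, Finset.prod_eq_multiset_prod,
      show (fun k : Fin n => X - C (2 - 2 * Real.cos (2 * Real.pi * (k:ℕ) / n)))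
        = (fun a : ℝ => X - C a) ∘ (fun k : Fin n => 2 - 2 * Real.cos (2 * Real.pi * (k:ℕ) / n))
        from rfl,
      ← Multiset.map_map, roots_multiset_prod_X_sub_C]
  have hmi : mIco01 (cycleGraph n)
      = (Finset.univ.filter (fun k : Fin n => 6 * (k:ℕ) < n ∨ 5 * n < 6 * (k:ℕ))).card := by
    unfold mIco01
    rw [heigs, ← Multiset.countP_eq_card_filter, countP_map_card, Finset.card_def,
      Finset.filter_val]
    refine congrArg Multiset.card (Multiset.filter_congr ?_)
    intro k _
    have h1 := Real.cos_le_one (2 * Real.pi * (k:ℕ) / n)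
    rw [← cos_iff n (k:ℕ) hn k.isLt]
    constructor
    · rintro ⟨_, h⟩
      linarith
    · intro h
      exact ⟨by linarith, by linarith⟩
  rw [hmi]
  exact count_arith n hn
end

section
/- Let G be a graph on n vertices and let G' be obtained from G by deleting a pendant vertex (a vertex of degree 1). If the number of Laplacian eigenvalues of G' in [0,1) is at least k, then the number of Laplacian eigenvalues of G in [0,1) is at least k. -/
open SimpleGraph Matrix Polynomial

/-! ### Auxiliary material -/

set_option linter.unusedSectionVars false

section LinAlg

variable {n : Type} [Fintype n] [DecidableEq n]

private lemma aux_charmatrix_diag (d : n → ℝ) :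
    charmatrix (Matrix.diagonal d) = Matrix.diagonal (fun i => (X : ℝ[X]) - C (d i)) := by
  ext i j
  by_cases h : i = j
  · subst h; simp
  · simp [charmatrix_apply_ne _ _ _ h, Matrix.diagonal_apply_ne _ h]

private lemma aux_herm_charpoly {A : Matrix n n ℝ} (hA : A.IsHermitian) :
    A.charpoly = ∏ i, ((X : ℝ[X]) - C (hA.eigenvalues i)) := by
  set U : Matrix n n ℝ := (hA.eigenvectorUnitary : Matrix n n ℝ) with hUdef
  have hU : U * star U = 1 := (Matrix.mem_unitaryGroup_iff).mp hA.eigenvectorUnitary.2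
  set D : Matrix n n ℝ := Matrix.diagonal hA.eigenvalues with hD
  have hs : A = U * D * star U := by
    have := hA.spectral_theorem
    rw [this, Unitary.conjStarAlgAut_apply]; rfl
  set f : Matrix n n ℝ →+* Matrix n n ℝ[X] := (C : ℝ →+* ℝ[X]).mapMatrix with hf
  have hfU : f U * f (star U) = 1 := by rw [← _root_.map_mul, hU, _root_.map_one]
  have key : charmatrix A = f U * charmatrix D * f (star U) := by
    rw [charmatrix, charmatrix, hs]
    rw [Matrix.mul_sub, Matrix.sub_mul]
    congr 1
    · have : f U * Matrix.scalar n (X : ℝ[X]) = Matrix.scalar n (X : ℝ[X]) * f U :=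
        ((Matrix.scalar_commute (X : ℝ[X]) (fun r => mul_comm _ _) (f U)).symm : _)
      rw [this, mul_assoc, hfU, mul_one]
    · show (C : ℝ →+* ℝ[X]).mapMatrix (U * D * star U) = _
      rw [_root_.map_mul, _root_.map_mul]
  have hdet : A.charpoly = (charmatrix D).det := by
    rw [Matrix.charpoly, key, det_mul, det_mul]
    have h1 : (f U).det * (f (star U)).det = 1 := by
      rw [← det_mul, hfU, det_one]
    rw [mul_comm ((f U).det * (charmatrix D).det), ← mul_assoc,
      mul_comm ((f (star U)).det), h1, one_mul]
  rw [hdet, aux_charmatrix_diag, det_diagonal]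

private lemma aux_herm_roots {A : Matrix n n ℝ} (hA : A.IsHermitian) :
    A.charpoly.roots = Finset.univ.val.map hA.eigenvalues := by
  rw [aux_herm_charpoly hA]
  have : ∏ i, ((X : ℝ[X]) - C (hA.eigenvalues i))
      = ((Finset.univ.val.map hA.eigenvalues).map (fun a => X - C a)).prod := by
    rw [Multiset.map_map]; rfl
  rw [this, Polynomial.roots_multiset_prod_X_sub_C]

private lemma aux_inner_eq_sum_repr (B : OrthonormalBasis n ℝ (EuclideanSpace ℝ n))
    (x y : EuclideanSpace ℝ n) :
    (inner ℝ x y : ℝ) = ∑ i, B.repr x i * B.repr y i := by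
  rw [← B.repr.inner_map_map x y, PiLp.inner_apply]
  simp only [RCLike.inner_apply, starRingEnd_apply, star_trivial, mul_comm]

private lemma aux_dot_eq_inner (x y : EuclideanSpace ℝ n) :
    (x : n → ℝ) ⬝ᵥ (y : n → ℝ) = (inner ℝ x y : ℝ) := by
  simp [PiLp.inner_apply, dotProduct, mul_comm]

private lemma aux_repr_mulVec {A : Matrix n n ℝ} (hA : A.IsHermitian) (x : EuclideanSpace ℝ n)
    (i : n) :
    hA.eigenvectorBasis.repr (WithLp.toLp 2 (A *ᵥ x : n → ℝ)) i
      = hA.eigenvalues i * hA.eigenvectorBasis.repr x i := by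
  rw [OrthonormalBasis.repr_apply_apply, OrthonormalBasis.repr_apply_apply]
  rw [← aux_dot_eq_inner, ← aux_dot_eq_inner]
  show (hA.eigenvectorBasis i : n → ℝ) ⬝ᵥ (A *ᵥ (x : n → ℝ)) = _
  rw [dotProduct_mulVec]
  have hsymm : ∀ a b, A a b = A b a := fun a b => by
    conv_lhs => rw [← hA]
    simp [conjTranspose_apply]
  have hv : ∀ (v : n → ℝ), v ᵥ* A = A *ᵥ v := by
    intro v; ext j
    simp only [vecMul, mulVec, dotProduct]
    exact Finset.sum_congr rfl fun k _ => by rw [hsymm k j, mul_comm]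
  rw [hv]
  have he : A *ᵥ ((hA.eigenvectorBasis i : n → ℝ))
      = hA.eigenvalues i • ((hA.eigenvectorBasis i : n → ℝ)) := hA.mulVec_eigenvectorBasis i
  rw [he, smul_dotProduct]
  rfl

private lemma aux_quad_eq_sum {A : Matrix n n ℝ} (hA : A.IsHermitian) (x : EuclideanSpace ℝ n) :
    (x : n → ℝ) ⬝ᵥ (A *ᵥ (x : n → ℝ))
      = ∑ i, hA.eigenvalues i * (hA.eigenvectorBasis.repr x i)^2 := by
  rw [aux_dot_eq_inner, aux_inner_eq_sum_repr hA.eigenvectorBasis]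
  refine Finset.sum_congr rfl fun i _ => ?_
  rw [aux_repr_mulVec hA x i]
  ring

private lemma aux_normsq_eq_sum {A : Matrix n n ℝ} (hA : A.IsHermitian) (x : EuclideanSpace ℝ n) :
    (x : n → ℝ) ⬝ᵥ (x : n → ℝ) = ∑ i, (hA.eigenvectorBasis.repr x i)^2 := by
  rw [aux_dot_eq_inner, aux_inner_eq_sum_repr hA.eigenvectorBasis]
  exact Finset.sum_congr rfl fun i _ => (sq _).symm

private lemma aux_repr_zero_of_mem_span (B : OrthonormalBasis n ℝ (EuclideanSpace ℝ n))
    (S : Finset n) {x : EuclideanSpace ℝ n} (hx : x ∈ Submodule.span ℝ (B '' (S : Set n)))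
    {j : n} (hj : j ∉ S) :
    B.repr x j = 0 := by
  induction hx using Submodule.span_induction with
  | mem y hy =>
    obtain ⟨i, hi, rfl⟩ := hy
    rw [B.repr_self]
    rw [EuclideanSpace.single_apply]
    simp only [ite_eq_right_iff]
    intro hij; exact absurd (hij ▸ hi) hj
  | zero => simp
  | add y z _ _ hy hz => rw [map_add]; simp [Pi.add_apply, hy, hz]
  | smul c y _ hy => rw [_root_.map_smul]; simp [hy]

private lemma aux_finrank_span_onb (B : OrthonormalBasis n ℝ (EuclideanSpace ℝ n))
    (S : Finset n) :
    Module.finrank ℝ (Submodule.span ℝ (B '' (S : Set n))) = S.card := by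
  have h1 : (B '' (S : Set n)) = Set.range (fun i : (S : Set n) => B i) := by
    rw [← Set.image_eq_range]
  rw [h1, finrank_span_eq_card]
  · simp
  · exact B.orthonormal.linearIndependent.comp _ Subtype.val_injective

private lemma aux_finrank_le_card_small {A : Matrix n n ℝ} (hA : A.IsHermitian)
    (W : Submodule ℝ (EuclideanSpace ℝ n))
    (hW : ∀ x ∈ W, x ≠ 0 → (x : n → ℝ) ⬝ᵥ (A *ᵥ (x : n → ℝ)) < (x : n → ℝ) ⬝ᵥ (x : n → ℝ)) :
    Module.finrank ℝ W ≤ (Finset.univ.filter (fun i => hA.eigenvalues i < 1)).card := by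
  classical
  set B := hA.eigenvectorBasis with hB
  set S : Finset n := Finset.univ.filter (fun i => ¬ hA.eigenvalues i < 1) with hS
  set U : Submodule ℝ (EuclideanSpace ℝ n) := Submodule.span ℝ (B '' (S : Set n)) with hU
  have hdisj : W ⊓ U = ⊥ := by
    rw [Submodule.eq_bot_iff]
    rintro x ⟨hxW, hxU⟩
    by_contra hx0
    have h1 := hW x hxW hx0
    have h2 : (x : n → ℝ) ⬝ᵥ (x : n → ℝ) ≤ (x : n → ℝ) ⬝ᵥ (A *ᵥ (x : n → ℝ)) := by
      rw [aux_quad_eq_sum hA, aux_normsq_eq_sum hA]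
      apply Finset.sum_le_sum
      intro i _
      by_cases hi : i ∈ S
      · have h1le : 1 ≤ hA.eigenvalues i := not_lt.mp (by simpa [hS] using hi)
        nlinarith [sq_nonneg (B.repr x i)]
      · rw [aux_repr_zero_of_mem_span B S hxU hi]; simp
    exact absurd h1 (not_lt.mpr h2)
  have hUrank : Module.finrank ℝ U = S.card := aux_finrank_span_onb B S
  have hsum := Submodule.finrank_sup_add_finrank_inf_eq W U
  rw [hdisj, finrank_bot] at hsum
  have hle : Module.finrank ℝ ↥(W ⊔ U) ≤ Fintype.card n := by
    have h := Submodule.finrank_le (W ⊔ U)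
    simpa [finrank_euclideanSpace] using h
  have hcards := Finset.card_filter_add_card_filter_not
    (s := (Finset.univ : Finset n)) (p := fun i => hA.eigenvalues i < 1)
  simp only [Finset.card_univ] at hcards
  rw [hUrank] at hsum
  have hS2 : (Finset.univ.filter (fun a => ¬ hA.eigenvalues a < 1)).card = S.card := rfl
  omega

private lemma aux_key_perturb {A : Matrix n n ℝ} (u : n → ℝ) (hA : A.IsHermitian)
    (hAu : (A + Matrix.of (fun a b => u a * u b)).IsHermitian) :
    (Finset.univ.filter (fun i => hA.eigenvalues i < 1)).card ≤
      (Finset.univ.filter (fun i => hAu.eigenvalues i < 1)).card + 1 := by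
  classical
  set B := hA.eigenvectorBasis with hB
  set S : Finset n := Finset.univ.filter (fun i => hA.eigenvalues i < 1) with hS
  set Wspan : Submodule ℝ (EuclideanSpace ℝ n) := Submodule.span ℝ (B '' (S : Set n)) with hWspan
  set f : (EuclideanSpace ℝ n) →ₗ[ℝ] ℝ :=
    { toFun := fun x => u ⬝ᵥ (x : n → ℝ)
      map_add' := fun x y => dotProduct_add u x y
      map_smul' := fun c x => by
        show u ⬝ᵥ (c • (x : n → ℝ)) = c • (u ⬝ᵥ (x : n → ℝ))
        rw [dotProduct_smul] } with hf
  set W : Submodule ℝ (EuclideanSpace ℝ n) := Wspan ⊓ LinearMap.ker f with hW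
  have hdim : S.card ≤ Module.finrank ℝ W + 1 := by
    set g : ↥Wspan →ₗ[ℝ] ℝ := f.comp Wspan.subtype with hg
    have h1 : Module.finrank ℝ (LinearMap.range g) + Module.finrank ℝ (LinearMap.ker g)
        = Module.finrank ℝ Wspan := LinearMap.finrank_range_add_finrank_ker g
    have h2 : Module.finrank ℝ (LinearMap.range g) ≤ 1 := by
      have := Submodule.finrank_le (LinearMap.range g)
      simpa using this
    have h3 : LinearMap.ker g = Submodule.comap Wspan.subtype (LinearMap.ker f) := by
      rw [hg, LinearMap.ker_comp]
    have h4 : Module.finrank ℝ W = Module.finrank ℝ (LinearMap.ker g) := by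
      rw [← Submodule.finrank_map_subtype_eq Wspan (LinearMap.ker g), h3,
        Submodule.map_comap_subtype]
    have h5 : Module.finrank ℝ Wspan = S.card := aux_finrank_span_onb B S
    omega
  have hprop : ∀ x ∈ W, x ≠ 0 →
      (x : n → ℝ) ⬝ᵥ ((A + Matrix.of (fun a b => u a * u b)) *ᵥ (x : n → ℝ))
        < (x : n → ℝ) ⬝ᵥ (x : n → ℝ) := by
    rintro x ⟨hxW, hxK⟩ hx0
    have hker : u ⬝ᵥ (x : n → ℝ) = 0 := hxK
    have hMx : (Matrix.of (fun a b => u a * u b)) *ᵥ (x : n → ℝ) = 0 := by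
      ext a
      simp only [Matrix.mulVec, Matrix.of_apply, Pi.zero_apply]
      calc ∑ b, u a * u b * (x : n → ℝ) b = u a * (u ⬝ᵥ (x : n → ℝ)) := by
            rw [dotProduct, Finset.mul_sum]; exact Finset.sum_congr rfl fun b _ => by ring
        _ = 0 := by rw [hker, mul_zero]
    rw [Matrix.add_mulVec, hMx, add_zero]
    rw [aux_quad_eq_sum hA, aux_normsq_eq_sum hA]
    have hex : ∃ i, B.repr x i ≠ 0 := by
      by_contra hall
      push_neg at hall
      apply hx0
      have : B.repr x = 0 := by
        ext i; exact hall i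
      simpa using B.repr.map_eq_zero_iff.mp this
    obtain ⟨i0, hi0⟩ := hex
    have hi0S : i0 ∈ S := by
      by_contra hi0S
      exact hi0 (aux_repr_zero_of_mem_span B S hxW hi0S)
    apply Finset.sum_lt_sum (s := Finset.univ)
    · intro i _
      by_cases hi : i ∈ S
      · have : hA.eigenvalues i < 1 := by simpa [hS] using hi
        nlinarith [sq_nonneg (B.repr x i)]
      · rw [aux_repr_zero_of_mem_span B S hxW hi]; simp
    · refine ⟨i0, Finset.mem_univ _, ?_⟩
      have hlt : hA.eigenvalues i0 < 1 := by simpa [hS] using hi0S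
      have : (0:ℝ) < (B.repr x i0)^2 := by positivity
      nlinarith
  have := aux_finrank_le_card_small hAu W hprop
  omega

end LinAlg

section GraphLemmas

variable {V : Type} [Fintype V] [DecidableEq V]

private lemma aux_lapR_eq (G : SimpleGraph V) [inst : DecidableRel G.Adj] :
    lapR G = G.lapMatrix ℝ := by
  unfold lapR
  congr!

private lemma aux_lapMatrix_apply (G : SimpleGraph V) [DecidableRel G.Adj] (i j : V) :
    G.lapMatrix ℝ i j
      = (if i = j then (G.degree i : ℝ) else 0) - (if G.Adj i j then 1 else 0) := by
  simp [lapMatrix, degMatrix, Matrix.sub_apply, Matrix.diagonal_apply, adjMatrix_apply]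

private lemma aux_neighborFinset_v (G : SimpleGraph V) [DecidableRel G.Adj] (v w : V)
    (hw : G.Adj v w) (huniq : ∀ y, G.Adj v y → y = w) : G.neighborFinset v = {w} := by
  ext y
  simp only [mem_neighborFinset, Finset.mem_singleton]
  exact ⟨fun h => huniq y h, fun h => h ▸ hw⟩

private lemma aux_lapR_pendant (G : SimpleGraph V) (v w : V) (hw : G.Adj v w)
    (huniq : ∀ y, G.Adj v y → y = w) :
    lapR G = lapR (G.deleteEdges {s(v,w)})
      + Matrix.of (fun a b => (if a = v then (1:ℝ) else if a = w then -1 else 0) *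
          (if b = v then 1 else if b = w then -1 else 0)) := by
  classical
  set G₀ := G.deleteEdges {s(v,w)} with hG₀
  have hvw : v ≠ w := G.ne_of_adj hw
  have aG0 : ∀ a b, G₀.Adj a b ↔ G.Adj a b ∧ ¬ (a = v ∧ b = w ∨ a = w ∧ b = v) := by
    intro a b
    rw [hG₀, deleteEdges_adj]
    simp [Sym2.eq_iff]
  have a_v : ∀ b, G.Adj v b ↔ b = w := fun b => ⟨fun h => huniq b h, fun h => h ▸ hw⟩
  have a_v' : ∀ a, G.Adj a v ↔ a = w := fun a => by rw [adj_comm]; exact a_v a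
  have f1 : G.degree v = 1 := by
    rw [show G.degree v = (G.neighborFinset v).card from rfl,
      aux_neighborFinset_v G v w hw huniq, Finset.card_singleton]
  have f2 : G₀.degree v = 0 := by
    rw [show G₀.degree v = (G₀.neighborFinset v).card from rfl, Finset.card_eq_zero]
    ext y
    simp only [mem_neighborFinset, Finset.notMem_empty, iff_false]
    rw [aG0]
    rintro ⟨h1, h2⟩
    exact h2 (Or.inl ⟨rfl, huniq y h1⟩)
  have f3 : G₀.degree w + 1 = G.degree w := by
    have hnb : G₀.neighborFinset w = (G.neighborFinset w).erase v := by
      ext y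
      simp only [mem_neighborFinset, Finset.mem_erase]
      rw [aG0]
      constructor
      · rintro ⟨h1, h2⟩
        exact ⟨fun hyv => h2 (Or.inr ⟨rfl, hyv⟩), h1⟩
      · rintro ⟨h1, h2⟩
        refine ⟨h2, ?_⟩
        rintro (⟨rfl, rfl⟩ | ⟨hww, rfl⟩)
        · exact hvw rfl
        · exact h1 rfl
    rw [show G₀.degree w = (G₀.neighborFinset w).card from rfl,
      show G.degree w = (G.neighborFinset w).card from rfl, hnb]
    exact Finset.card_erase_add_one (by rw [mem_neighborFinset]; exact hw.symm)
  have f4 : ∀ a, a ≠ v → a ≠ w → G₀.degree a = G.degree a := by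
    intro a hav haw
    rw [show G₀.degree a = (G₀.neighborFinset a).card from rfl,
      show G.degree a = (G.neighborFinset a).card from rfl]
    congr 1
    ext y
    simp only [mem_neighborFinset]
    rw [aG0]
    constructor
    · exact fun h => h.1
    · intro h
      refine ⟨h, ?_⟩
      rintro (⟨rfl, rfl⟩ | ⟨rfl, rfl⟩)
      · exact hav rfl
      · exact haw rfl
  have aG0' : ∀ a b, a ≠ v → b ≠ v → (G₀.Adj a b ↔ G.Adj a b) := by
    intro a b hav hbv
    rw [aG0]
    constructor
    · exact fun h => h.1
    · intro h
      refine ⟨h, ?_⟩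
      rintro (⟨rfl, rfl⟩ | ⟨rfl, rfl⟩)
      · exact hav rfl
      · exact hbv rfl
  rw [aux_lapR_eq, aux_lapR_eq]
  ext a b
  simp only [Matrix.add_apply, Matrix.of_apply, aux_lapMatrix_apply]
  by_cases hav : a = v
  · subst hav
    by_cases hbv : b = a
    · subst hbv
      simp [f1, f2, G.irrefl, G₀.irrefl, hvw]
    · by_cases hbw : b = w
      · subst hbw
        have h1 : G.Adj a b := hw
        have h2 : ¬ G₀.Adj a b := by rw [aG0]; rintro ⟨_, h⟩; exact h (Or.inl ⟨rfl, rfl⟩)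
        simp [hbv, Ne.symm hbv, h1, h2, hvw]
      · have h1 : ¬ G.Adj a b := fun h => hbw (huniq b h)
        have h2 : ¬ G₀.Adj a b := fun h => h1 ((aG0 a b).mp h).1
        simp [hbv, Ne.symm hbv, h1, h2, hbw]
  · by_cases haw : a = w
    · subst haw
      by_cases hbv : b = v
      · subst hbv
        have h1 : G.Adj a b := hw.symm
        have h2 : ¬ G₀.Adj a b := by rw [aG0]; rintro ⟨_, h⟩; exact h (Or.inr ⟨rfl, rfl⟩)
        simp [hav, Ne.symm hav, h1, h2, hvw]
      · by_cases hbw : b = a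
        · subst hbw
          have hne : ¬ G.Adj b b := G.irrefl
          have hne0 : ¬ G₀.Adj b b := G₀.irrefl
          simp only [if_pos rfl, if_neg hav, if_neg hne, if_neg hne0]
          push_cast [← f3]
          ring
        · have heq : (G₀.Adj a b ↔ G.Adj a b) := aG0' a b hav hbv
          simp [hav, hbv, hbw, Ne.symm hbw, heq]
    · by_cases hbv : b = v
      · subst hbv
        have h1 : ¬ G.Adj a b := fun h => haw ((a_v' a).mp h)
        have h2 : ¬ G₀.Adj a b := fun h => h1 ((aG0 a b).mp h).1
        simp [hav, Ne.symm hav, h1, h2, haw]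
      · by_cases hbw : b = w
        · subst hbw
          have heq : (G₀.Adj a b ↔ G.Adj a b) := aG0' a b hav hbv
          by_cases hab : a = b
          · subst hab; exact absurd rfl haw
          · simp [hav, haw, hab, heq]
        · have heq : (G₀.Adj a b ↔ G.Adj a b) := aG0' a b hav hbv
          by_cases hab : a = b
          · subst hab
            simp [hav, haw, f4 a hav haw, heq]
          · simp [hav, haw, hbv, hbw, hab, heq]

private lemma aux_charpoly_G0 (G : SimpleGraph V) (v w : V) (hw : G.Adj v w)
    (huniq : ∀ y, G.Adj v y → y = w) :
    (lapR (G.deleteEdges {s(v,w)})).charpoly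
      = X * (lapR (G.induce {x : V | x ≠ v})).charpoly := by
  classical
  set G₀ := G.deleteEdges {s(v,w)} with hG₀
  have hvw : v ≠ w := G.ne_of_adj hw
  have a_v' : ∀ a, G.Adj a v ↔ a = w := fun a => by
    rw [adj_comm]; exact ⟨fun h => huniq a h, fun h => h ▸ hw⟩
  have aG0 : ∀ a b, G₀.Adj a b ↔ G.Adj a b ∧ ¬ (a = v ∧ b = w ∨ a = w ∧ b = v) := by
    intro a b
    rw [hG₀, deleteEdges_adj]
    simp [Sym2.eq_iff]
  have hnoadj : ∀ a, ¬ G₀.Adj a v := by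
    intro a ha
    rw [aG0] at ha
    obtain ⟨h1, h2⟩ := ha
    exact h2 (Or.inr ⟨(a_v' a).mp h1, rfl⟩)
  have hnoadj' : ∀ a, ¬ G₀.Adj v a := fun a ha => hnoadj a ha.symm
  have f2 : G₀.degree v = 0 := by
    rw [show G₀.degree v = (G₀.neighborFinset v).card from rfl, Finset.card_eq_zero]
    ext y
    simp only [mem_neighborFinset, Finset.notMem_empty, iff_false]
    exact hnoadj' y
  have hrow : ∀ a, lapR G₀ a v = 0 := by
    intro a
    rw [aux_lapR_eq, aux_lapMatrix_apply]
    by_cases hav : a = v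
    · subst hav; simp [f2, G₀.irrefl]
    · simp [hav, hnoadj a]
  have hcol : ∀ a, lapR G₀ v a = 0 := by
    intro a
    rw [aux_lapR_eq, aux_lapMatrix_apply]
    by_cases hav : v = a
    · subst hav; simp [f2, G₀.irrefl]
    · simp [hav, hnoadj' a]
  set e : V ≃ {x // x ≠ v} ⊕ {x // ¬ x ≠ v} := (Equiv.sumCompl (fun x => x ≠ v)).symm with he
  set A : Matrix {x // x ≠ v} {x // x ≠ v} ℝ :=
    (lapR G₀).submatrix (Subtype.val) (Subtype.val) with hA
  have hblock : (Matrix.reindex e e (lapR G₀)) = Matrix.fromBlocks A 0 0 0 := by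
    ext i j
    rcases i with i | i <;> rcases j with j | j <;>
      simp only [Matrix.reindex_apply, Matrix.submatrix_apply, he, Equiv.symm_symm,
        Equiv.sumCompl_apply_inl, Equiv.sumCompl_apply_inr, Matrix.fromBlocks_apply₁₁,
        Matrix.fromBlocks_apply₁₂, Matrix.fromBlocks_apply₂₁, Matrix.fromBlocks_apply₂₂,
        Matrix.zero_apply, hA]
    · have : j.1 = v := not_not.mp j.2
      rw [this]; exact hrow i.1
    · have : i.1 = v := not_not.mp i.2
      rw [this]; exact hcol j.1
    · have h1 : i.1 = v := not_not.mp i.2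
      rw [h1]; exact hcol j.1
  haveI : Unique {x // ¬ x ≠ v} := ⟨⟨⟨v, not_not.mpr rfl⟩⟩, fun a => Subtype.ext (not_not.mp a.2)⟩
  have hcp : (lapR G₀).charpoly = A.charpoly * X := by
    rw [← Matrix.charpoly_reindex e (lapR G₀), hblock]
    rw [Matrix.charpoly, charmatrix_fromBlocks]
    simp only [Matrix.map_zero C C.map_zero, neg_zero]
    rw [Matrix.det_fromBlocks_zero₂₁]
    congr 1
    rw [Matrix.det_unique]
    simp [charmatrix_apply_eq]
  have hAind : A = lapR (G.induce {x : V | x ≠ v}) := by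
    have hadj : ∀ (i j : {x : V | x ≠ v}),
        (G.induce {x : V | x ≠ v}).Adj i j ↔ G₀.Adj i.1 j.1 := by
      intro i j
      simp only [induce_adj]
      rw [aG0]
      constructor
      · intro h
        refine ⟨by simpa using h, ?_⟩
        rintro (⟨h1, h2⟩ | ⟨h1, h2⟩)
        · exact i.2 h1
        · exact j.2 h2
      · intro h
        simpa using h.1
    have hdeg : ∀ (i : {x : V | x ≠ v}),
        G₀.degree i.1 = (G.induce {x : V | x ≠ v}).degree i := by
      intro i
      rw [show G₀.degree i.1 = (G₀.neighborFinset i.1).card from rfl,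
        show (G.induce {x : V | x ≠ v}).degree i
          = ((G.induce {x : V | x ≠ v}).neighborFinset i).card from rfl]
      have : G₀.neighborFinset i.1 = ((G.induce {x : V | x ≠ v}).neighborFinset i).map
          ⟨Subtype.val, Subtype.val_injective⟩ := by
        ext y
        simp only [mem_neighborFinset, Finset.mem_map, Function.Embedding.coeFn_mk]
        constructor
        · intro hy
          have hyv : y ≠ v := fun hyv => hnoadj i.1 (hyv ▸ hy)
          exact ⟨⟨y, hyv⟩, (hadj i ⟨y, hyv⟩).mpr hy, rfl⟩
        · rintro ⟨b, hb, rfl⟩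
          exact (hadj i b).mp hb
      rw [this, Finset.card_map]
    ext i j
    rw [hA]
    simp only [Matrix.submatrix_apply]
    rw [aux_lapR_eq, aux_lapR_eq, aux_lapMatrix_apply, aux_lapMatrix_apply]
    congr 1
    · by_cases hij : i = j
      · subst hij; simp [hdeg i]
      · have hij' : i.1 ≠ j.1 := fun h => hij (Subtype.ext h)
        simp [hij, hij']
    · have hiff : G₀.Adj i.1 j.1 ↔ G.Adj i.1 j.1 := by
        rw [aG0]
        constructor
        · exact fun h => h.1
        · intro h
          refine ⟨h, ?_⟩
          rintro (⟨h1, _⟩ | ⟨_, h2⟩)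
          · exact i.2 h1
          · exact j.2 h2
      simp [hiff]
  rw [hcp, hAind, mul_comm]

private lemma aux_multiset_filter_ext {α : Type*} (p q : α → Prop) (d1 : DecidablePred p)
    (d2 : DecidablePred q) (h : ∀ a, p a ↔ q a) (s : Multiset α) :
    @Multiset.filter α p d1 s = @Multiset.filter α q d2 s := by
  letI := d1
  letI := d2
  induction s using Multiset.induction with
  | empty => simp
  | cons a s ih =>
    by_cases hpa : p a
    · rw [Multiset.filter_cons_of_pos _ hpa, Multiset.filter_cons_of_pos _ ((h a).mp hpa), ih]
    · rw [Multiset.filter_cons_of_neg _ hpa,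
        Multiset.filter_cons_of_neg _ (fun hq => hpa ((h a).mpr hq)), ih]

private lemma aux_mIco01_eq_card {W : Type} [Fintype W] [DecidableEq W] (H : SimpleGraph W)
    (hH : (lapR H).IsHermitian) (hnn : ∀ i, 0 ≤ hH.eigenvalues i) :
    mIco01 H = (Finset.univ.filter (fun i => hH.eigenvalues i < 1)).card := by
  classical
  unfold mIco01 lapEigs
  rw [aux_herm_roots hH]
  rw [Multiset.filter_map]
  rw [Multiset.card_map]
  have h1 : (Finset.univ.filter (fun i => hH.eigenvalues i < 1)).card
      = Multiset.card ((Finset.univ.filter (fun i => hH.eigenvalues i < 1)).val) := rfl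
  rw [h1, Finset.filter_val]
  exact congrArg Multiset.card
    (aux_multiset_filter_ext _ _ _ _ (fun i => by simp [Function.comp, hnn i]) _)

end GraphLemmas

/-- Deleting a pendant vertex (a vertex with exactly one neighbour): if the graph `G'`
obtained from `G` by deleting a pendant vertex `v` has at least `k` Laplacian eigenvalues
in `[0,1)`, then so does `G`. -/
theorem pendant_deletion_Ico {V : Type} [Fintype V] [DecidableEq V] (G : SimpleGraph V)
    (v : V) (hv : ∃! w : V, G.Adj v w) (k : ℕ)
    (h : k ≤ mIco01 (G.induce {w : V | w ≠ v})) :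
    k ≤ mIco01 G := by
  classical
  obtain ⟨w, hw, huniq'⟩ := hv
  have huniq : ∀ y, G.Adj v y → y = w := fun y hy => huniq' y hy
  set G₀ := G.deleteEdges {s(v,w)} with hG₀
  set u : V → ℝ := fun a => if a = v then (1:ℝ) else if a = w then -1 else 0 with hu
  -- positive semidefiniteness
  have hpsdG : (lapR G).PosSemidef := by
    rw [aux_lapR_eq G]; exact posSemidef_lapMatrix ℝ G
  have hpsdG₀ : (lapR G₀).PosSemidef := by
    rw [aux_lapR_eq G₀]; exact posSemidef_lapMatrix ℝ G₀
  have hpsdG' : (lapR (G.induce {x : V | x ≠ v})).PosSemidef := by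
    rw [aux_lapR_eq (G.induce {x : V | x ≠ v})]
    exact posSemidef_lapMatrix ℝ (G.induce {x : V | x ≠ v})
  have hHG : (lapR G).IsHermitian := hpsdG.1
  have hHG₀ : (lapR G₀).IsHermitian := hpsdG₀.1
  -- counting via eigenvalues
  have hcG : mIco01 G = (Finset.univ.filter (fun i => hHG.eigenvalues i < 1)).card :=
    aux_mIco01_eq_card G hHG (fun i => hpsdG.eigenvalues_nonneg i)
  have hcG₀ : mIco01 G₀ = (Finset.univ.filter (fun i => hHG₀.eigenvalues i < 1)).card :=
    aux_mIco01_eq_card G₀ hHG₀ (fun i => hpsdG₀.eigenvalues_nonneg i)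
  -- perturbation
  have hmat : lapR G = lapR G₀ + Matrix.of (fun a b => u a * u b) :=
    aux_lapR_pendant G v w hw huniq
  have hAu : (lapR G₀ + Matrix.of (fun a b => u a * u b)).IsHermitian := hmat ▸ hHG
  have hkey := aux_key_perturb u hHG₀ hAu
  have hcongr : ∀ (M N : Matrix V V ℝ) (hMN : M = N) (hM : M.IsHermitian) (hN : N.IsHermitian),
      (Finset.univ.filter (fun i => hM.eigenvalues i < 1)).card
        = (Finset.univ.filter (fun i => hN.eigenvalues i < 1)).card := by
    rintro M N rfl hM hN; rfl
  have h2 := hcongr _ _ hmat hHG hAu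
  -- factorization of the characteristic polynomial
  have hfac : mIco01 G₀ = mIco01 (G.induce {x : V | x ≠ v}) + 1 := by
    unfold mIco01 lapEigs
    have hrw := aux_charpoly_G0 G v w hw huniq
    rw [hrw]
    have hne : (X : ℝ[X]) * (lapR (G.induce {x : V | x ≠ v})).charpoly ≠ 0 :=
      mul_ne_zero Polynomial.X_ne_zero (Matrix.charpoly_monic _).ne_zero
    rw [Polynomial.roots_mul hne, Polynomial.roots_X]
    rw [Multiset.filter_add, Multiset.card_add]
    norm_num [Multiset.filter_singleton, add_comm]
  have hh : k ≤ mIco01 (G.induce {x : V | x ≠ v}) := h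
  omega
end

section
/- Let A and B be n×n Hermitian matrices, and let i, j satisfy 1 ≤ i + j - n ≤ n. Then μ_{i+j-n}(A + B) ≤ μ_i(A) + μ_j(B), where μ_k denotes the k-th smallest eigenvalue. Moreover, equality holds if and only if there exists a unit vector x with A x = μ_i(A) x, B x = μ_j(B) x, and (A+B)x = μ_{i+j-n}(A+B) x. -/
open Matrix

/-- `μ_k(A)`: the `k`-th smallest eigenvalue (indexed from `1`) of a Hermitian matrix `A`. -/
noncomputable def muH {n : ℕ} {A : Matrix (Fin n) (Fin n) ℂ} (hA : A.IsHermitian) (k : ℕ) :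
    ℝ :=
  ((Multiset.map hA.eigenvalues (Finset.univ : Finset (Fin n)).val).sort (· ≤ ·)).getD (k - 1) 0

section WeylHelpers

lemma weyl_sortedList_eq {n : ℕ} (f : Fin n → ℝ) :
    (Multiset.map f (Finset.univ : Finset (Fin n)).val).sort (· ≤ ·)
      = List.ofFn (f ∘ Tuple.sort f) := by
  have hσ : Multiset.map (⇑(Tuple.sort f)) (Finset.univ : Finset (Fin n)).val
      = (Finset.univ : Finset (Fin n)).val := by
    have h := Finset.map_univ_equiv (Tuple.sort f)
    calc Multiset.map (⇑(Tuple.sort f)) (Finset.univ : Finset (Fin n)).val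
        = (Finset.map (Tuple.sort f).toEmbedding Finset.univ).val := rfl
      _ = (Finset.univ : Finset (Fin n)).val := by rw [h]
  apply fun hp h1 h2 => List.Perm.eq_of_pairwise' (r := (· ≤ · : ℝ → ℝ → Prop)) h1 h2 hp
  · rw [← Multiset.coe_eq_coe, Multiset.sort_eq, List.ofFn_eq_map, ← Multiset.map_coe]
    have huniv : ((List.finRange n : List (Fin n)) : Multiset (Fin n))
        = (Finset.univ : Finset (Fin n)).val := rfl
    have h2 : Multiset.map (f ∘ ⇑(Tuple.sort f)) (Finset.univ : Finset (Fin n)).val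
        = Multiset.map f (Finset.univ : Finset (Fin n)).val := by
      rw [← Multiset.map_map, hσ]
    rw [huniv, h2]
  · exact Multiset.pairwise_sort _ _
  · rw [List.pairwise_ofFn]
    intro a b hab
    exact Tuple.monotone_sort f hab.le

lemma weyl_muH_eq {n : ℕ} {A : Matrix (Fin n) (Fin n) ℂ} (hA : A.IsHermitian) (k : ℕ)
    (h1 : 1 ≤ k) (h2 : k ≤ n) :
    muH hA k = hA.eigenvalues (Tuple.sort hA.eigenvalues ⟨k - 1, by omega⟩) := by
  unfold muH
  rw [weyl_sortedList_eq]
  have hlen : k - 1 < (List.ofFn (hA.eigenvalues ∘ Tuple.sort hA.eigenvalues)).length := by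
    rw [List.length_ofFn]; omega
  rw [List.getD_eq_getElem _ _ hlen, List.getElem_ofFn]
  rfl

variable {n : ℕ} {M : Matrix (Fin n) (Fin n) ℂ}

lemma weyl_eigen_apply (hM : M.IsHermitian) (l : Fin n) :
    Matrix.toEuclideanLin M (hM.eigenvectorBasis l)
      = (hM.eigenvalues l : ℂ) • hM.eigenvectorBasis l := by
  rw [Matrix.toEuclideanLin_apply, hM.mulVec_eigenvectorBasis l]
  show hM.eigenvalues l • hM.eigenvectorBasis l = _
  exact RCLike.real_smul_eq_coe_smul (K := ℂ) _ _

lemma weyl_eigen_expand (hM : M.IsHermitian) (x : EuclideanSpace ℂ (Fin n)) :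
    Matrix.toEuclideanLin M x
      = ∑ l, (hM.eigenvectorBasis.repr x l * (hM.eigenvalues l : ℂ)) • hM.eigenvectorBasis l := by
  conv_lhs => rw [← hM.eigenvectorBasis.sum_repr x]
  rw [map_sum]
  refine Finset.sum_congr rfl fun l _ => ?_
  rw [LinearMap.map_smul, weyl_eigen_apply hM l, smul_smul]

lemma weyl_eigen_inner (hM : M.IsHermitian) (x : EuclideanSpace ℂ (Fin n)) :
    (inner ℂ x (Matrix.toEuclideanLin M x) : ℂ)
      = ((∑ l, hM.eigenvalues l * ‖hM.eigenvectorBasis.repr x l‖ ^ 2 : ℝ) : ℂ) := by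
  rw [weyl_eigen_expand hM, inner_sum]
  push_cast
  refine Finset.sum_congr rfl fun l _ => ?_
  rw [inner_smul_right, ← inner_conj_symm, ← OrthonormalBasis.repr_apply_apply]
  set r := hM.eigenvectorBasis.repr x l
  have : r * (starRingEnd ℂ) r = (‖r‖ : ℂ) ^ 2 := by
    rw [Complex.mul_conj]
    norm_cast
    rw [← Complex.sq_norm]
  linear_combination (hM.eigenvalues l : ℂ) * this

lemma weyl_norm_sq_repr (hM : M.IsHermitian) (x : EuclideanSpace ℂ (Fin n)) :
    ‖x‖ ^ 2 = ∑ l, ‖hM.eigenvectorBasis.repr x l‖ ^ 2 := by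
  rw [← hM.eigenvectorBasis.repr.norm_map x, EuclideanSpace.norm_eq,
    Real.sq_sqrt (Finset.sum_nonneg fun l _ => sq_nonneg _)]

lemma weyl_repr_zero {m : ℕ} (b : OrthonormalBasis (Fin n) ℂ (EuclideanSpace ℂ (Fin n)))
    (e : Fin m → Fin n) {x : EuclideanSpace ℂ (Fin n)}
    (hx : x ∈ Submodule.span ℂ (Set.range fun p => b (e p)))
    {l : Fin n} (hl : ∀ p, e p ≠ l) : b.repr x l = 0 := by
  set f : EuclideanSpace ℂ (Fin n) →ₗ[ℂ] ℂ :=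
    (EuclideanSpace.proj l).toLinearMap.comp b.repr.toLinearEquiv.toLinearMap with hf
  have hker : Submodule.span ℂ (Set.range fun p => b (e p)) ≤ LinearMap.ker f := by
    rw [Submodule.span_le]
    rintro y ⟨p, rfl⟩
    simp only [SetLike.mem_coe, LinearMap.mem_ker, hf, LinearMap.comp_apply]
    show b.repr (b (e p)) l = 0
    rw [b.repr_self, EuclideanSpace.single_apply]
    simp [Ne.symm (hl p)]
  have := hker hx
  rw [LinearMap.mem_ker] at this
  exact this

lemma weyl_sum_le_bound (hM : M.IsHermitian) (x : EuclideanSpace ℂ (Fin n)) (c : ℝ)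
    (h : ∀ l, c < hM.eigenvalues l → hM.eigenvectorBasis.repr x l = 0) :
    ∑ l, hM.eigenvalues l * ‖hM.eigenvectorBasis.repr x l‖ ^ 2
      ≤ c * (∑ l, ‖hM.eigenvectorBasis.repr x l‖ ^ 2) := by
  rw [Finset.mul_sum]
  refine Finset.sum_le_sum fun l _ => ?_
  rcases le_or_gt (hM.eigenvalues l) c with hc | hc
  · exact mul_le_mul_of_nonneg_right hc (sq_nonneg _)
  · rw [h l hc]; simp

lemma weyl_sum_ge_bound (hM : M.IsHermitian) (x : EuclideanSpace ℂ (Fin n)) (c : ℝ)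
    (h : ∀ l, hM.eigenvalues l < c → hM.eigenvectorBasis.repr x l = 0) :
    c * (∑ l, ‖hM.eigenvectorBasis.repr x l‖ ^ 2)
      ≤ ∑ l, hM.eigenvalues l * ‖hM.eigenvectorBasis.repr x l‖ ^ 2 := by
  rw [Finset.mul_sum]
  refine Finset.sum_le_sum fun l _ => ?_
  rcases le_or_gt c (hM.eigenvalues l) with hc | hc
  · exact mul_le_mul_of_nonneg_right hc (sq_nonneg _)
  · rw [h l hc]; simp

lemma weyl_eigenvec_of_eq (hM : M.IsHermitian) (x : EuclideanSpace ℂ (Fin n)) (c : ℝ)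
    (hterm : ∀ l, hM.eigenvalues l * ‖hM.eigenvectorBasis.repr x l‖ ^ 2
      = c * ‖hM.eigenvectorBasis.repr x l‖ ^ 2) :
    Matrix.toEuclideanLin M x = (c : ℂ) • x := by
  rw [weyl_eigen_expand hM]
  conv_rhs => rw [← hM.eigenvectorBasis.sum_repr x, Finset.smul_sum]
  refine Finset.sum_congr rfl fun l _ => ?_
  rcases eq_or_ne (hM.eigenvectorBasis.repr x l) 0 with h0 | h0
  · simp [h0]
  · have hev : hM.eigenvalues l = c := by
      have := hterm l
      have hne : ‖hM.eigenvectorBasis.repr x l‖ ^ 2 ≠ 0 := by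
        simpa using h0
      exact mul_right_cancel₀ hne this
    rw [hev, smul_smul, mul_comm]

lemma weyl_terms_eq_of_sum_eq_le (hM : M.IsHermitian) (x : EuclideanSpace ℂ (Fin n)) (c : ℝ)
    (h : ∀ l, c < hM.eigenvalues l → hM.eigenvectorBasis.repr x l = 0)
    (heq : ∑ l, hM.eigenvalues l * ‖hM.eigenvectorBasis.repr x l‖ ^ 2
      = c * (∑ l, ‖hM.eigenvectorBasis.repr x l‖ ^ 2)) :
    ∀ l, hM.eigenvalues l * ‖hM.eigenvectorBasis.repr x l‖ ^ 2
      = c * ‖hM.eigenvectorBasis.repr x l‖ ^ 2 := by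
  have hsum : ∑ l, (c * ‖hM.eigenvectorBasis.repr x l‖ ^ 2
      - hM.eigenvalues l * ‖hM.eigenvectorBasis.repr x l‖ ^ 2) = 0 := by
    rw [Finset.sum_sub_distrib, ← Finset.mul_sum, heq, sub_self]
  have hnonneg : ∀ l ∈ Finset.univ, (0:ℝ) ≤ c * ‖hM.eigenvectorBasis.repr x l‖ ^ 2
      - hM.eigenvalues l * ‖hM.eigenvectorBasis.repr x l‖ ^ 2 := by
    intro l _
    rcases le_or_gt (hM.eigenvalues l) c with hc | hc
    · have := mul_le_mul_of_nonneg_right hc (sq_nonneg ‖hM.eigenvectorBasis.repr x l‖)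
      linarith
    · rw [h l hc]; simp
  intro l
  have := (Finset.sum_eq_zero_iff_of_nonneg hnonneg).mp hsum l (Finset.mem_univ l)
  linarith

lemma weyl_terms_eq_of_sum_eq_ge (hM : M.IsHermitian) (x : EuclideanSpace ℂ (Fin n)) (c : ℝ)
    (h : ∀ l, hM.eigenvalues l < c → hM.eigenvectorBasis.repr x l = 0)
    (heq : ∑ l, hM.eigenvalues l * ‖hM.eigenvectorBasis.repr x l‖ ^ 2
      = c * (∑ l, ‖hM.eigenvectorBasis.repr x l‖ ^ 2)) :
    ∀ l, hM.eigenvalues l * ‖hM.eigenvectorBasis.repr x l‖ ^ 2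
      = c * ‖hM.eigenvectorBasis.repr x l‖ ^ 2 := by
  have hsum : ∑ l, (hM.eigenvalues l * ‖hM.eigenvectorBasis.repr x l‖ ^ 2
      - c * ‖hM.eigenvectorBasis.repr x l‖ ^ 2) = 0 := by
    rw [Finset.sum_sub_distrib, ← Finset.mul_sum, heq, sub_self]
  have hnonneg : ∀ l ∈ Finset.univ, (0:ℝ) ≤ hM.eigenvalues l * ‖hM.eigenvectorBasis.repr x l‖ ^ 2
      - c * ‖hM.eigenvectorBasis.repr x l‖ ^ 2 := by
    intro l _
    rcases le_or_gt c (hM.eigenvalues l) with hc | hc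
    · have := mul_le_mul_of_nonneg_right hc (sq_nonneg ‖hM.eigenvectorBasis.repr x l‖)
      linarith
    · rw [h l hc]; simp
  intro l
  have := (Finset.sum_eq_zero_iff_of_nonneg hnonneg).mp hsum l (Finset.mem_univ l)
  linarith

lemma weyl_inf_dim (S T : Submodule ℂ (EuclideanSpace ℂ (Fin n))) :
    Module.finrank ℂ S + Module.finrank ℂ T
      ≤ n + Module.finrank ℂ (S ⊓ T : Submodule ℂ (EuclideanSpace ℂ (Fin n))) := by
  have h := Submodule.finrank_sup_add_finrank_inf_eq S T
  have h2 : Module.finrank ℂ (S ⊔ T : Submodule ℂ (EuclideanSpace ℂ (Fin n)))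
      ≤ Module.finrank ℂ (EuclideanSpace ℂ (Fin n)) := Submodule.finrank_le _
  have h3 : Module.finrank ℂ (EuclideanSpace ℂ (Fin n)) = n := by
    simp [finrank_euclideanSpace]
  omega

lemma weyl_exists_ne_zero {S : Submodule ℂ (EuclideanSpace ℂ (Fin n))}
    (h : 1 ≤ Module.finrank ℂ S) : ∃ x ∈ S, x ≠ 0 := by
  rw [← Submodule.ne_bot_iff]
  intro hbot
  rw [hbot] at h
  simp [finrank_bot] at h

end WeylHelpers

set_option maxHeartbeats 1000000 in
/-- Weyl's inequality `μ_{i+j-n}(A+B) ≤ μ_i(A) + μ_j(B)` for Hermitian `A`, `B`,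
with equality iff there is a common unit eigenvector for the three eigenvalues involved. -/
theorem hermitian_weyl_inequality {n : ℕ} (A B : Matrix (Fin n) (Fin n) ℂ)
    (hA : A.IsHermitian) (hB : B.IsHermitian)
    (i j : ℕ) (hi1 : 1 ≤ i) (hin : i ≤ n) (hj1 : 1 ≤ j) (hjn : j ≤ n)
    (h1 : 1 ≤ i + j - n) (h2 : i + j - n ≤ n) :
    muH (hA.add hB) (i + j - n) ≤ muH hA i + muH hB j ∧
      (muH (hA.add hB) (i + j - n) = muH hA i + muH hB j ↔
        ∃ x : Fin n → ℂ, (∑ w, ‖x w‖ ^ 2 = 1) ∧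
          A.mulVec x = (muH hA i : ℂ) • x ∧
          B.mulVec x = (muH hB j : ℂ) • x ∧
          (A + B).mulVec x = (muH (hA.add hB) (i + j - n) : ℂ) • x) := by
  classical
  have hC : (A + B).IsHermitian := hA.add hB
  set k := i + j - n with hkdef
  have hk1 : 1 ≤ k := h1
  have hkn : k ≤ n := h2
  have hijk : n + k = i + j := by omega
  set a := muH hA i with hadef
  set b := muH hB j with hbdef
  set c := muH (hA.add hB) k with hcdef
  set σA := Tuple.sort hA.eigenvalues with hσA
  set σB := Tuple.sort hB.eigenvalues with hσB
  set σC := Tuple.sort hC.eigenvalues with hσC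
  have hmuA : a = hA.eigenvalues (σA ⟨i - 1, by omega⟩) := weyl_muH_eq hA i hi1 hin
  have hmuB : b = hB.eigenvalues (σB ⟨j - 1, by omega⟩) := weyl_muH_eq hB j hj1 hjn
  have hmuC : c = hC.eigenvalues (σC ⟨k - 1, by omega⟩) := weyl_muH_eq hC k hk1 hkn
  -- families of eigenvectors
  set eA : Fin i → Fin n := fun p => σA (Fin.castLE hin p) with heA
  set eB : Fin j → Fin n := fun p => σB (Fin.castLE hjn p) with heB
  set eC : Fin (n - k + 1) → Fin n := fun p => σC ⟨k - 1 + (p : ℕ), by omega⟩ with heC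
  have hinjA : Function.Injective eA :=
    σA.injective.comp (Fin.castLE_injective hin)
  have hinjB : Function.Injective eB :=
    σB.injective.comp (Fin.castLE_injective hjn)
  have hinjC : Function.Injective eC := by
    intro p q hpq
    simp only [heC] at hpq
    have h := σC.injective hpq
    have h2 : k - 1 + (p:ℕ) = k - 1 + (q:ℕ) := congrArg Fin.val h
    exact Fin.ext (by omega)
  set SA := Submodule.span ℂ (Set.range fun p => hA.eigenvectorBasis (eA p)) with hSA
  set SB := Submodule.span ℂ (Set.range fun p => hB.eigenvectorBasis (eB p)) with hSB
  set SC := Submodule.span ℂ (Set.range fun p => hC.eigenvectorBasis (eC p)) with hSC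
  have hrA : Module.finrank ℂ SA = i := by
    have h := finrank_span_eq_card
      ((hA.eigenvectorBasis.orthonormal.comp eA hinjA).linearIndependent)
    rw [Fintype.card_fin] at h
    exact h
  have hrB : Module.finrank ℂ SB = j := by
    have h := finrank_span_eq_card
      ((hB.eigenvectorBasis.orthonormal.comp eB hinjB).linearIndependent)
    rw [Fintype.card_fin] at h
    exact h
  have hrC : Module.finrank ℂ SC = n - k + 1 := by
    have h := finrank_span_eq_card
      ((hC.eigenvectorBasis.orthonormal.comp eC hinjC).linearIndependent)
    rw [Fintype.card_fin] at h
    exact h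
  -- dimension counting
  have hd1 := weyl_inf_dim SA SB
  have hd2 := weyl_inf_dim (SA ⊓ SB) SC
  have hfin : 1 ≤ Module.finrank ℂ (SA ⊓ SB ⊓ SC : Submodule ℂ (EuclideanSpace ℂ (Fin n))) := by
    omega
  obtain ⟨x, hxmem, hxne⟩ := weyl_exists_ne_zero hfin
  have hxA : x ∈ SA := (le_trans inf_le_left inf_le_left : SA ⊓ SB ⊓ SC ≤ SA) hxmem
  have hxB : x ∈ SB := (le_trans inf_le_left inf_le_right : SA ⊓ SB ⊓ SC ≤ SB) hxmem
  have hxC : x ∈ SC := (inf_le_right : SA ⊓ SB ⊓ SC ≤ SC) hxmem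
  -- repr vanishing
  have hreprA : ∀ l, a < hA.eigenvalues l → hA.eigenvectorBasis.repr x l = 0 := by
    intro l hl
    refine weyl_repr_zero _ eA hxA fun p hp => ?_
    have hle : hA.eigenvalues (eA p) ≤ a := by
      rw [hmuA]
      exact Tuple.monotone_sort hA.eigenvalues
        (show Fin.castLE hin p ≤ ⟨i - 1, by omega⟩ by
          rw [Fin.le_def]; simp; omega)
    rw [hp] at hle
    exact absurd hl (not_lt.mpr hle)
  have hreprB : ∀ l, b < hB.eigenvalues l → hB.eigenvectorBasis.repr x l = 0 := by
    intro l hl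
    refine weyl_repr_zero _ eB hxB fun p hp => ?_
    have hle : hB.eigenvalues (eB p) ≤ b := by
      rw [hmuB]
      exact Tuple.monotone_sort hB.eigenvalues
        (show Fin.castLE hjn p ≤ ⟨j - 1, by omega⟩ by
          rw [Fin.le_def]; simp; omega)
    rw [hp] at hle
    exact absurd hl (not_lt.mpr hle)
  have hreprC : ∀ l, hC.eigenvalues l < c → hC.eigenvectorBasis.repr x l = 0 := by
    intro l hl
    refine weyl_repr_zero _ eC hxC fun p hp => ?_
    have hge : c ≤ hC.eigenvalues (eC p) := by
      rw [hmuC]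
      exact Tuple.monotone_sort hC.eigenvalues
        (show (⟨k - 1, by omega⟩ : Fin n) ≤ ⟨k - 1 + p, by omega⟩ by
          rw [Fin.le_def]; simp)
    rw [hp] at hge
    exact absurd hl (not_lt.mpr hge)
  -- the three sums
  set sA := ∑ l, hA.eigenvalues l * ‖hA.eigenvectorBasis.repr x l‖ ^ 2 with hsA
  set sB := ∑ l, hB.eigenvalues l * ‖hB.eigenvectorBasis.repr x l‖ ^ 2 with hsB'
  set sC := ∑ l, hC.eigenvalues l * ‖hC.eigenvectorBasis.repr x l‖ ^ 2 with hsC'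
  have hA_le : sA ≤ a * ‖x‖ ^ 2 := by
    rw [weyl_norm_sq_repr hA x]
    exact weyl_sum_le_bound hA x a hreprA
  have hB_le : sB ≤ b * ‖x‖ ^ 2 := by
    rw [weyl_norm_sq_repr hB x]
    exact weyl_sum_le_bound hB x b hreprB
  have hC_ge : c * ‖x‖ ^ 2 ≤ sC := by
    rw [weyl_norm_sq_repr hC x]
    exact weyl_sum_ge_bound hC x c hreprC
  have hsplit : sC = sA + sB := by
    have h1 : (inner ℂ x (Matrix.toEuclideanLin (A + B) x) : ℂ)
        = inner ℂ x (Matrix.toEuclideanLin A x) + inner ℂ x (Matrix.toEuclideanLin B x) := by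
      rw [map_add, LinearMap.add_apply, inner_add_right]
    rw [weyl_eigen_inner hA x, weyl_eigen_inner hB x, weyl_eigen_inner hC x] at h1
    exact_mod_cast h1
  have hnormpos : (0:ℝ) < ‖x‖ ^ 2 := by
    have : ‖x‖ ≠ 0 := fun h => hxne (norm_eq_zero.mp h)
    positivity
  have hineq : c ≤ a + b := by
    have : c * ‖x‖ ^ 2 ≤ (a + b) * ‖x‖ ^ 2 := by
      calc c * ‖x‖ ^ 2 ≤ sC := hC_ge
        _ = sA + sB := hsplit
        _ ≤ a * ‖x‖ ^ 2 + b * ‖x‖ ^ 2 := add_le_add hA_le hB_le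
        _ = (a + b) * ‖x‖ ^ 2 := by ring
    exact le_of_mul_le_mul_right this hnormpos
  refine ⟨hineq, ?_, ?_⟩
  · -- equality → common eigenvector
    intro heq
    have hsAeq : sA = a * ‖x‖ ^ 2 := by nlinarith
    have hsBeq : sB = b * ‖x‖ ^ 2 := by nlinarith
    have hsCeq : sC = c * ‖x‖ ^ 2 := by nlinarith
    rw [weyl_norm_sq_repr hA x] at hsAeq
    rw [weyl_norm_sq_repr hB x] at hsBeq
    rw [weyl_norm_sq_repr hC x] at hsCeq
    have hTA : Matrix.toEuclideanLin A x = (a : ℂ) • x :=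
      weyl_eigenvec_of_eq hA x a (weyl_terms_eq_of_sum_eq_le hA x a hreprA hsAeq)
    have hTB : Matrix.toEuclideanLin B x = (b : ℂ) • x :=
      weyl_eigenvec_of_eq hB x b (weyl_terms_eq_of_sum_eq_le hB x b hreprB hsBeq)
    have hTC : Matrix.toEuclideanLin (A + B) x = (c : ℂ) • x :=
      weyl_eigenvec_of_eq hC x c (weyl_terms_eq_of_sum_eq_ge hC x c hreprC hsCeq)
    -- normalize
    set y : EuclideanSpace ℂ (Fin n) := ((‖x‖⁻¹ : ℝ) : ℂ) • x with hy
    have hxnorm : ‖x‖ ≠ 0 := fun h => hxne (norm_eq_zero.mp h)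
    have hynorm : ‖y‖ = 1 := by
      rw [hy, norm_smul]
      simp only [Complex.norm_real, Real.norm_eq_abs, abs_inv, abs_norm]
      exact inv_mul_cancel₀ hxnorm
    have hTAy : Matrix.toEuclideanLin A y = (a : ℂ) • y := by
      rw [hy, LinearMap.map_smul, hTA, smul_comm]
    have hTBy : Matrix.toEuclideanLin B y = (b : ℂ) • y := by
      rw [hy, LinearMap.map_smul, hTB, smul_comm]
    have hTCy : Matrix.toEuclideanLin (A + B) y = (c : ℂ) • y := by
      rw [hy, LinearMap.map_smul, hTC, smul_comm]
    refine ⟨(WithLp.equiv 2 (Fin n → ℂ)) y, ?_, ?_, ?_, ?_⟩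
    · have h := hynorm
      rw [EuclideanSpace.norm_eq] at h
      have := congrArg (· ^ 2) h
      simp only [one_pow] at this
      rw [Real.sq_sqrt (Finset.sum_nonneg fun l _ => sq_nonneg _)] at this
      exact this
    · have := congrArg (WithLp.equiv 2 (Fin n → ℂ)) hTAy
      change A *ᵥ (WithLp.equiv 2 (Fin n → ℂ)) y = _ at this
      rw [this]
      rfl
    · have := congrArg (WithLp.equiv 2 (Fin n → ℂ)) hTBy
      change B *ᵥ (WithLp.equiv 2 (Fin n → ℂ)) y = _ at this
      rw [this]
      rfl
    · have := congrArg (WithLp.equiv 2 (Fin n → ℂ)) hTCy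
      change (A + B) *ᵥ (WithLp.equiv 2 (Fin n → ℂ)) y = _ at this
      rw [this]
      rfl
  · -- common eigenvector → equality
    rintro ⟨v, hv1, hvA, hvB, hvC⟩
    have hvne : v ≠ 0 := by
      intro h0
      rw [h0] at hv1
      simp at hv1
    obtain ⟨w, hw⟩ : ∃ w, v w ≠ 0 := by
      by_contra hall
      push_neg at hall
      exact hvne (funext hall)
    have hsum : (A + B).mulVec v = ((a + b : ℝ) : ℂ) • v := by
      rw [Matrix.add_mulVec, hvA, hvB, ← add_smul]
      push_cast
      rfl
    rw [hvC] at hsum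
    have := congrFun hsum w
    simp only [Pi.smul_apply, smul_eq_mul] at this
    have hcc : (c : ℂ) = ((a + b : ℝ) : ℂ) := mul_right_cancel₀ hw this
    exact_mod_cast hcc
end

section
/- Let G be a graph and let H be obtained from G and a path P_3 by joining a pendant vertex of P_3 to a vertex of G by an edge. Then the multiplicity of 1 as a Laplacian eigenvalue of H equals the multiplicity of 1 as a Laplacian eigenvalue of G. -/
open SimpleGraph Matrix Polynomial

/-- The graph obtained from `G` and the path `P_m` by joining a pendant (end) vertex of `P_m`
to the vertex `v` of `G` by an edge. The path vertices are `Sum.inr 0, …, Sum.inr (m-1)` with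
edges `i ↔ i+1`, and the new edge joins `Sum.inl v` to the end vertex `Sum.inr 0`. -/
def attachPath {V : Type} (G : SimpleGraph V) (v : V) (m : ℕ) : SimpleGraph (V ⊕ Fin m) :=
  SimpleGraph.fromRel (fun a b =>
    (∃ x y : V, a = Sum.inl x ∧ b = Sum.inl y ∧ G.Adj x y) ∨
    (∃ i j : Fin m, a = Sum.inr i ∧ b = Sum.inr j ∧ (i : ℕ) + 1 = (j : ℕ)) ∨
    (∃ i : Fin m, a = Sum.inl v ∧ b = Sum.inr i ∧ (i : ℕ) = 0))


section
variable {n : Type*} [Fintype n] [DecidableEq n] {R : Type*} [CommRing R]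

lemma charpoly_conj_aux (P Q A : Matrix n n R) (hPQ : P * Q = 1) :
    (P * A * Q).charpoly = A.charpoly := by
  have hmapone : (1 : Matrix n n R).map (C : R → R[X]) = 1 :=
    Matrix.map_one _ (map_zero C) (map_one C)
  have key : charmatrix (P * A * Q) = P.map C * charmatrix A * Q.map C := by
    unfold charmatrix
    rw [RingHom.mapMatrix_apply, RingHom.mapMatrix_apply, mul_sub, sub_mul]
    congr 1
    · refine (?_ : _ = _).symm
      have hc : Commute (Matrix.scalar n (X : R[X])) (P.map C) :=
        scalar_commute _ (fun r' => Commute.all _ _) _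
      calc P.map C * Matrix.scalar n (X : R[X]) * Q.map C
          = Matrix.scalar n (X : R[X]) * (P.map C * Q.map C) := by
            rw [← hc.eq, mul_assoc]
        _ = Matrix.scalar n (X : R[X]) := by
            rw [← Matrix.map_mul, hPQ, hmapone, mul_one]
    · rw [← Matrix.map_mul, ← Matrix.map_mul]
  have hdet : (P.map (C : R → R[X])).det * (Q.map (C : R → R[X])).det = 1 := by
    rw [← det_mul, ← Matrix.map_mul, hPQ, hmapone, det_one]
  rw [Matrix.charpoly, Matrix.charpoly, key, det_mul, det_mul]
  calc (P.map C).det * (charmatrix A).det * (Q.map C).det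
      = (charmatrix A).det * ((P.map C).det * (Q.map C).det) := by ring
    _ = (charmatrix A).det := by rw [hdet, mul_one]

lemma charmatrix_diagonal (w : n → R) :
    charmatrix (diagonal w) = diagonal (fun i => (X : R[X]) - C (w i)) := by
  ext i j
  by_cases h : i = j
  · subst h; simp [charmatrix_apply_eq]
  · rw [charmatrix_apply_ne _ _ _ h, diagonal_apply_ne _ h, diagonal_apply_ne _ h]
    simp

lemma charpoly_diagonal (w : n → R) :
    (diagonal w).charpoly = ∏ i, ((X : R[X]) - C (w i)) := by
  rw [Matrix.charpoly, _root_.charmatrix_diagonal, det_diagonal]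

lemma roots_charpoly_diagonal {K : Type*} [Field K] (w : n → K) :
    (diagonal w).charpoly.roots = Finset.univ.val.map w := by
  rw [_root_.charpoly_diagonal]
  have h : (∏ i, ((X : K[X]) - C (w i)))
      = ((Finset.univ.val.map w).map (fun a : K => X - C a)).prod := by
    rw [Multiset.map_map]; rfl
  rw [h, roots_multiset_prod_X_sub_C]

end

section
variable {n : Type*} [Fintype n] [DecidableEq n]

lemma count_charpoly_roots_eq_finrank_ker (A : Matrix n n ℝ) (hA : A.IsHermitian) (μ : ℝ) :
    A.charpoly.roots.count μ
      = Module.finrank ℝ (LinearMap.ker (A - μ • 1).mulVecLin) := by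
  set U : Matrix n n ℝ := (hA.eigenvectorUnitary : Matrix n n ℝ) with hUdef
  set w : n → ℝ := hA.eigenvalues with hwdef
  have hU1 : U * star U = 1 := mem_unitaryGroup_iff.mp hA.eigenvectorUnitary.2
  have hU2 : star U * U = 1 := mem_unitaryGroup_iff'.mp hA.eigenvectorUnitary.2
  have hspec : A = U * diagonal w * star U := by
    have h := hA.spectral_theorem
    have h2 : (RCLike.ofReal ∘ hA.eigenvalues : n → ℝ) = w := by funext i; simp [hwdef]
    rwa [h2] at h
  -- LHS
  have hcount : A.charpoly.roots.count μ = Fintype.card {i // w i = μ} := by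
    rw [hspec, charpoly_conj_aux U (star U) _ hU1, roots_charpoly_diagonal,
      Multiset.count_map, Fintype.card_subtype]
    rw [Finset.card, Finset.filter_val]
    congr 1
    apply Multiset.filter_congr
    intro i _
    exact ⟨fun h => h.symm, fun h => h.symm⟩
  -- RHS
  have hsub : A - μ • 1 = U * diagonal (fun i => w i - μ) * star U := by
    have hdiag : diagonal w - μ • (1 : Matrix n n ℝ) = diagonal (fun i => w i - μ) := by
      ext i j
      by_cases h : i = j
      · subst h; simp
      · simp [diagonal_apply_ne _ h, Matrix.one_apply_ne h]
    have hone : U * (μ • (1 : Matrix n n ℝ)) * star U = μ • 1 := by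
      rw [Matrix.mul_smul, Matrix.smul_mul, mul_one, hU1]
    rw [← hdiag, Matrix.mul_sub, Matrix.sub_mul, hone, hspec]
  have hdetU : IsUnit U.det ∧ IsUnit (star U).det := by
    have hd : U.det * (star U).det = 1 := by rw [← det_mul, hU1, det_one]
    exact ⟨IsUnit.of_mul_eq_one _ hd,
      IsUnit.of_mul_eq_one _ (by rw [mul_comm] at hd; exact hd)⟩
  have hrank : (A - μ • 1).rank = Fintype.card {i // w i - μ ≠ 0} := by
    rw [hsub, rank_mul_eq_left_of_isUnit_det _ _ hdetU.2,
      rank_mul_eq_right_of_isUnit_det _ _ hdetU.1, rank_diagonal]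
  have hrn : (A - μ • 1).rank
      + Module.finrank ℝ (LinearMap.ker (A - μ • 1).mulVecLin) = Fintype.card n := by
    rw [Matrix.rank, LinearMap.finrank_range_add_finrank_ker (A - μ • 1).mulVecLin,
      Module.finrank_fintype_fun_eq_card ℝ]
  have hcompl : Fintype.card {i // w i - μ ≠ 0} = Fintype.card n - Fintype.card {i // w i = μ} := by
    have he : {i // w i - μ ≠ 0} ≃ {i // ¬ (w i = μ)} := by
      apply Equiv.subtypeEquivRight
      intro i
      rw [sub_ne_zero]
    rw [Fintype.card_congr he, Fintype.card_subtype_compl]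
  have hle : Fintype.card {i // w i = μ} ≤ Fintype.card n := Fintype.card_subtype_le _
  omega
end


set_option linter.unusedSectionVars false
section Graph
variable {V : Type} [Fintype V] [DecidableEq V] (G : SimpleGraph V) (v : V)

open scoped Classical in
lemma lapR_mulVec (x : V → ℝ) (a : V) :
    (lapR G *ᵥ x) a = ∑ j, (if G.Adj a j then x a - x j else 0) := by
  letI := Classical.decRel G.Adj
  show (G.lapMatrix ℝ *ᵥ x) a = _
  rw [lapMatrix_mulVec_apply, degree_eq_sum_if_adj, Finset.sum_mul]
  have h : ∑ u ∈ G.neighborFinset a, x u = ∑ j, if G.Adj a j then x j else 0 := by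
    rw [neighborFinset_eq_filter, Finset.sum_filter]
  rw [h, ← Finset.sum_sub_distrib]
  apply Finset.sum_congr rfl
  intro j _
  split_ifs <;> ring

lemma adj_inl_inl (u w : V) :
    (attachPath G v 3).Adj (Sum.inl u) (Sum.inl w) ↔ G.Adj u w := by
  simp only [attachPath, fromRel_adj]
  constructor
  · rintro ⟨hne, h | h⟩ <;>
      rcases h with ⟨x, y, hx, hy, hxy⟩ | ⟨i, j, hi, hj, hij⟩ | ⟨i, ha, hb, hi⟩ <;>
      simp_all <;> exact G.adj_symm hxy
  · intro h
    refine ⟨by simp [G.ne_of_adj h], Or.inl (Or.inl ⟨u, w, rfl, rfl, h⟩)⟩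

lemma adj_inl_inr (u : V) (i : Fin 3) :
    (attachPath G v 3).Adj (Sum.inl u) (Sum.inr i) ↔ (u = v ∧ i = 0) := by
  simp only [attachPath, fromRel_adj]
  constructor
  · rintro ⟨-, h | h⟩ <;>
      rcases h with ⟨x, y, hx, hy, hxy⟩ | ⟨i', j', hi, hj, hij⟩ | ⟨i', ha, hb, hi⟩ <;>
      simp_all <;> omega
  · rintro ⟨rfl, rfl⟩
    exact ⟨by simp, Or.inl (Or.inr (Or.inr ⟨0, rfl, rfl, rfl⟩))⟩

lemma adj_inr_inl (u : V) (i : Fin 3) :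
    (attachPath G v 3).Adj (Sum.inr i) (Sum.inl u) ↔ (u = v ∧ i = 0) := by
  rw [adj_comm, adj_inl_inr]

omit [Fintype V] [DecidableEq V] in
lemma adj_inr_inr (i j : Fin 3) :
    (attachPath G v 3).Adj (Sum.inr i) (Sum.inr j) ↔
      ((i : ℕ) + 1 = (j : ℕ) ∨ (j : ℕ) + 1 = (i : ℕ)) := by
  simp only [attachPath, fromRel_adj]
  constructor
  · rintro ⟨-, h | h⟩ <;>
      rcases h with ⟨x, y, hx, hy, hxy⟩ | ⟨i', j', hi, hj, hij⟩ | ⟨i', ha, hb, hi⟩ <;>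
      simp_all
  · rintro (h | h)
    · exact ⟨by simp [Fin.ext_iff]; omega, Or.inl (Or.inr (Or.inl ⟨i, j, rfl, rfl, h⟩))⟩
    · exact ⟨by simp [Fin.ext_iff]; omega, Or.inr (Or.inr (Or.inl ⟨j, i, rfl, rfl, h⟩))⟩


section Rows
open scoped Classical
variable {V : Type} [Fintype V] [DecidableEq V] (G : SimpleGraph V) (v : V)

lemma lapH_row_inl (x : (V ⊕ Fin 3) → ℝ) (u : V) :
    (lapR (attachPath G v 3) *ᵥ x) (Sum.inl u)
      = (lapR G *ᵥ (x ∘ Sum.inl)) u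
        + (if u = v then x (Sum.inl u) - x (Sum.inr 0) else 0) := by
  rw [lapR_mulVec, lapR_mulVec, Fintype.sum_sum_type]
  congr 1
  · apply Finset.sum_congr rfl
    intro w _
    rw [if_congr (adj_inl_inl G v u w) rfl rfl]
    rfl
  · have h : ∀ i : Fin 3,
        (if (attachPath G v 3).Adj (Sum.inl u) (Sum.inr i) then x (Sum.inl u) - x (Sum.inr i) else 0)
          = (if (u = v ∧ i = 0) then x (Sum.inl u) - x (Sum.inr i) else 0) :=
      fun i => if_congr (adj_inl_inr G v u i) rfl rfl
    rw [Fin.sum_univ_three, h 0, h 1, h 2]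
    by_cases hu : u = v <;> simp [hu]

lemma lapH_row_inr (x : (V ⊕ Fin 3) → ℝ) (i : Fin 3) :
    (lapR (attachPath G v 3) *ᵥ x) (Sum.inr i)
      = (if i = 0 then x (Sum.inr 0) - x (Sum.inl v) else 0)
        + ∑ j : Fin 3, (if ((i:ℕ)+1 = (j:ℕ) ∨ (j:ℕ)+1 = (i:ℕ)) then x (Sum.inr i) - x (Sum.inr j) else 0) := by
  rw [lapR_mulVec, Fintype.sum_sum_type]
  congr 1
  · have h : ∀ u : V,
        (if (attachPath G v 3).Adj (Sum.inr i) (Sum.inl u) then x (Sum.inr i) - x (Sum.inl u) else 0)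
          = (if (u = v ∧ i = 0) then x (Sum.inr i) - x (Sum.inl u) else 0) :=
      fun u => if_congr (adj_inr_inl G v u i) rfl rfl
    simp only [h]
    by_cases hi : i = 0
    · subst hi; simp [Finset.sum_ite_eq']
    · simp [hi]
  · apply Finset.sum_congr rfl
    intro j _
    exact if_congr (adj_inr_inr G v i j) rfl rfl


/-- Extension of a vector on `V` to `V ⊕ Fin 3`. -/
noncomputable def extFun (y : V → ℝ) : (V ⊕ Fin 3) → ℝ :=
  Sum.elim y (fun i => if i = 0 then y v else if i = 1 then 0 else - y v)

lemma key_iff (x : (V ⊕ Fin 3) → ℝ) :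
    lapR (attachPath G v 3) *ᵥ x = x ↔
      (lapR G *ᵥ (x ∘ Sum.inl) = x ∘ Sum.inl ∧ x (Sum.inr 0) = x (Sum.inl v) ∧
        x (Sum.inr 1) = 0 ∧ x (Sum.inr 2) = - x (Sum.inl v)) := by
  constructor
  · intro h
    have h0 := congrFun h (Sum.inr 0)
    have h1 := congrFun h (Sum.inr 1)
    have h2 := congrFun h (Sum.inr 2)
    rw [lapH_row_inr] at h0 h1 h2
    simp [Fin.sum_univ_three] at h0 h1 h2
    have e1 : x (Sum.inr 1) = 0 := by linarith
    have e0 : x (Sum.inr 0) = x (Sum.inl v) := by linarith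
    have e2 : x (Sum.inr 2) = - x (Sum.inl v) := by linarith
    refine ⟨?_, e0, e1, e2⟩
    funext u
    have hu := congrFun h (Sum.inl u)
    rw [lapH_row_inl] at hu
    by_cases huv : u = v
    · subst huv
      rw [if_pos rfl] at hu
      show (lapR G *ᵥ (x ∘ Sum.inl)) u = x (Sum.inl u)
      linarith
    · rw [if_neg huv] at hu
      show (lapR G *ᵥ (x ∘ Sum.inl)) u = x (Sum.inl u)
      linarith
  · rintro ⟨hG, e0, e1, e2⟩
    funext a
    cases a with
    | inl u =>
      rw [lapH_row_inl]
      have := congrFun hG u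
      by_cases huv : u = v
      · subst huv
        rw [if_pos rfl]
        show _ = x (Sum.inl u)
        simp only [Function.comp_apply] at this
        linarith
      · rw [if_neg huv]
        show _ = x (Sum.inl u)
        simp only [Function.comp_apply] at this
        linarith
    | inr i =>
      rw [lapH_row_inr]
      fin_cases i <;> simp [Fin.sum_univ_three] <;> linarith

lemma mem_ker_one {n : Type} [Fintype n] [DecidableEq n] (A : Matrix n n ℝ) (x : n → ℝ) :
    x ∈ LinearMap.ker (A - (1:ℝ) • 1).mulVecLin ↔ A *ᵥ x = x := by
  rw [LinearMap.mem_ker, mulVecLin_apply, sub_mulVec, smul_mulVec, one_mulVec,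
    sub_eq_zero, one_smul]

noncomputable def kerEquiv :
    LinearMap.ker (lapR (attachPath G v 3) - (1:ℝ) • 1).mulVecLin ≃ₗ[ℝ]
      LinearMap.ker (lapR G - (1:ℝ) • 1).mulVecLin where
  toFun x := ⟨x.1 ∘ Sum.inl, by
    rw [mem_ker_one]
    exact ((key_iff G v x.1).mp ((mem_ker_one _ _).mp x.2)).1⟩
  invFun y := ⟨extFun v y.1, by
    rw [mem_ker_one, key_iff]
    refine ⟨?_, by simp [extFun], by simp [extFun], by simp [extFun]⟩
    have : extFun v y.1 ∘ Sum.inl = y.1 := rfl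
    rw [this]
    exact (mem_ker_one _ _).mp y.2⟩
  left_inv x := by
    obtain ⟨e0, e1, e2⟩ := ((key_iff G v x.1).mp ((mem_ker_one _ _).mp x.2)).2
    apply Subtype.ext
    funext a
    cases a with
    | inl u => rfl
    | inr i =>
      fin_cases i <;> simp [extFun] <;> simp_all
  right_inv y := by
    apply Subtype.ext
    funext u
    rfl
  map_add' x y := by
    apply Subtype.ext
    rfl
  map_smul' c x := by
    apply Subtype.ext
    rfl

end Rows



lemma lapR_isHermitian {V : Type} [Fintype V] [DecidableEq V] (G : SimpleGraph V) :
    (lapR G).IsHermitian := by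
  letI := Classical.decRel G.Adj
  exact (SimpleGraph.posSemidef_lapMatrix ℝ G).1

/-- Attaching a path `P_3` by an edge to a vertex of `G` does not change the multiplicity
of `1` as a Laplacian eigenvalue. -/
theorem attach_P3_eigenvalue_one {V : Type} [Fintype V] [DecidableEq V]
    (G : SimpleGraph V) (v : V) :
    mEig (attachPath G v 3) 1 = mEig G 1 := by
  show ((lapR (attachPath G v 3)).charpoly.roots).count 1 = ((lapR G).charpoly.roots).count 1
  rw [count_charpoly_roots_eq_finrank_ker _ (lapR_isHermitian _) 1,
    count_charpoly_roots_eq_finrank_ker _ (lapR_isHermitian _) 1]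
  exact LinearEquiv.finrank_eq (kerEquiv G v)
end Graph
end

section
/- Let C_{n,r} be the lollipop graph with girth r ≡ 0 (mod 6). Then 1 is a Laplacian eigenvalue of C_{n,r}, and its multiplicity is 2 if n ≡ 0 (mod 3) and 1 if n ≢ 0 (mod 3). -/
open SimpleGraph Matrix Polynomial

/-- The lollipop graph `C_{n,r}` on vertices `0, …, n-1`: the path `0-1-⋯-(n-1)` together
with the extra edge joining `0` and `r-1`, so that `0, 1, …, r-1` form a cycle of length `r`
with a pendant path on `n - r` vertices attached at the cycle vertex `r-1`. -/
def lollipop (n r : ℕ) : SimpleGraph (Fin n) :=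
  SimpleGraph.fromRel (fun i j => (i : ℕ) + 1 = (j : ℕ) ∨ ((i : ℕ) = 0 ∧ (j : ℕ) = r - 1))


section Spectral
open Matrix Polynomial Finset

variable {m : Type} [Fintype m] [DecidableEq m]

lemma charpoly_eq_prod (A : Matrix m m ℝ) (hA : A.IsHermitian) :
    A.charpoly = ∏ i, (X - C (hA.eigenvalues i)) := by
  classical
  set U : Matrix m m ℝ := (hA.eigenvectorUnitary : Matrix m m ℝ) with hU
  have hUU : U * star U = 1 := (Matrix.mem_unitaryGroup_iff).mp hA.eigenvectorUnitary.2
  have hspec := hA.spectral_theorem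
  set D : Matrix m m ℝ := Matrix.diagonal (RCLike.ofReal ∘ hA.eigenvalues) with hD
  have hscal : ∀ (B : Matrix m m ℝ), B.map C * Matrix.scalar m (X : ℝ[X]) = Matrix.scalar m (X : ℝ[X]) * B.map C :=
    fun B => (Matrix.scalar_commute (X : ℝ[X]) (fun p => Polynomial.commute_X p) (B.map C)).symm
  have hmap : charmatrix A = (U.map C) * charmatrix D * ((star U).map C) := by
    unfold charmatrix
    conv_lhs => rw [hspec]
    rw [Matrix.mul_sub, Matrix.sub_mul]
    congr 1
    · rw [hscal, Matrix.mul_assoc, ← Matrix.map_mul, hUU]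
      simp
    · simp only [RingHom.mapMatrix_apply]
      rw [Unitary.conjStarAlgAut_apply, Matrix.map_mul, Matrix.map_mul]
  have hdet : A.charpoly = D.charpoly := by
    unfold Matrix.charpoly
    have hUU2 : star U * U = 1 := (Matrix.mem_unitaryGroup_iff').mp hA.eigenvectorUnitary.2
    rw [hmap, Matrix.det_mul, Matrix.det_mul, mul_comm, ← mul_assoc, ← Matrix.det_mul, ← Matrix.map_mul, hUU2]
    simp
  rw [hdet]
  unfold Matrix.charpoly
  have : charmatrix D = Matrix.diagonal (fun i => (X : ℝ[X]) - C (hA.eigenvalues i)) := by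
    unfold charmatrix
    ext i j
    rcases eq_or_ne i j with rfl | hij
    · simp [hD, Matrix.scalar_apply]
    · simp [hD, Matrix.scalar_apply, hij, Matrix.diagonal_apply_ne _ hij]
  rw [this, Matrix.det_diagonal]

lemma count_roots_eq (A : Matrix m m ℝ) (hA : A.IsHermitian) (μ : ℝ) :
    A.charpoly.roots.count μ = (univ.filter (fun i => hA.eigenvalues i = μ)).card := by
  classical
  rw [charpoly_eq_prod A hA]
  have h1 : (∏ i, (X - C (hA.eigenvalues i)))
      = (Multiset.map (fun a => X - C a) (univ.val.map hA.eigenvalues)).prod := by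
    rw [Multiset.map_map]
    rfl
  rw [h1, roots_multiset_prod_X_sub_C]
  rw [Multiset.count_map]
  rw [Finset.card_filter]
  simp [Finset.sum_boole, eq_comm]
  congr 1

lemma rank_sub_eq (A : Matrix m m ℝ) (hA : A.IsHermitian) (μ : ℝ) :
    (A - μ • 1).rank = (univ.filter (fun i => hA.eigenvalues i ≠ μ)).card := by
  classical
  set U : Matrix m m ℝ := (hA.eigenvectorUnitary : Matrix m m ℝ) with hU
  have hUU : U * star U = 1 := (Matrix.mem_unitaryGroup_iff).mp hA.eigenvectorUnitary.2
  have hdetU : IsUnit U.det := Matrix.UnitaryGroup.det_isUnit hA.eigenvectorUnitary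
  have hdetUs : IsUnit (star U).det := by
    have : (star U).det = star U.det := by
      rw [Matrix.star_eq_conjTranspose, Matrix.det_conjTranspose]
    rw [this]
    exact hdetU.star
  have hdecomp : A - μ • 1 = U * Matrix.diagonal (fun i => hA.eigenvalues i - μ) * star U := by
    conv_lhs => rw [hA.spectral_theorem]
    have h2 : Matrix.diagonal (fun i => hA.eigenvalues i - μ)
        = Matrix.diagonal (RCLike.ofReal ∘ hA.eigenvalues) - μ • (1 : Matrix m m ℝ) := by
      rw [Matrix.smul_one_eq_diagonal, Matrix.diagonal_sub]
      rfl
    rw [h2, Matrix.mul_sub, Matrix.sub_mul]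
    congr 1
    rw [Matrix.mul_smul, Matrix.smul_mul, Matrix.mul_one, hUU]
  rw [hdecomp, Matrix.rank_mul_eq_left_of_isUnit_det _ _ hdetUs,
    Matrix.rank_mul_eq_right_of_isUnit_det _ _ hdetU, Matrix.rank_diagonal]
  rw [Fintype.card_subtype]
  congr 1
  ext i
  simp [sub_eq_zero]

lemma nullity_eq (A : Matrix m m ℝ) (hA : A.IsHermitian) (μ : ℝ) :
    Module.finrank ℝ (LinearMap.ker (A - μ • 1).mulVecLin) = A.charpoly.roots.count μ := by
  classical
  have h1 := LinearMap.finrank_range_add_finrank_ker (A - μ • 1).mulVecLin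
  have h2 : Module.finrank ℝ (LinearMap.range (A - μ • 1).mulVecLin) = (A - μ • 1).rank := rfl
  have h3 : Module.finrank ℝ (m → ℝ) = Fintype.card m := Module.finrank_pi ℝ
  have h4 := Finset.card_filter_add_card_filter_not (s := (univ : Finset m))
    (p := fun i => hA.eigenvalues i = μ)
  rw [count_roots_eq A hA μ]
  rw [rank_sub_eq A hA μ] at h2
  have h5 := Finset.card_univ (α := m)
  rw [show (univ.filter (fun i => hA.eigenvalues i ≠ μ)) = (univ.filter (fun a => ¬ hA.eigenvalues a = μ)) from rfl] at h2
  omega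

end Spectral

section Graph
open SimpleGraph Matrix Polynomial Finset

lemma lapR_eq {V : Type} [Fintype V] [DecidableEq V] (G : SimpleGraph V) [inst : DecidableRel G.Adj] :
    lapR G = G.lapMatrix ℝ := by
  unfold lapR
  convert rfl

instance (n r : ℕ) : DecidableRel (lollipop n r).Adj := fun i j =>
  decidable_of_iff _ (SimpleGraph.fromRel_adj (fun i j : Fin n => (i:ℕ)+1 = (j:ℕ) ∨ ((i:ℕ)=0 ∧ (j:ℕ)=r-1)) i j).symm

lemma lollipop_adj_iff {n r : ℕ} (h3 : 3 ≤ r) {i j : Fin n} :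
    (lollipop n r).Adj i j ↔ ((i:ℕ)+1 = j ∨ (j:ℕ)+1 = i ∨ ((i:ℕ)=0 ∧ (j:ℕ)+1=r) ∨ ((j:ℕ)=0 ∧ (i:ℕ)+1=r)) := by
  simp only [lollipop, fromRel_adj, ne_eq, Fin.ext_iff]
  omega

section SumHelpers
variable {α : Type} [Fintype α] [DecidableEq α]

lemma sum_ite_one (P : α → Prop) [DecidablePred P] (f : α → ℝ) (u : α)
    (h : ∀ j, P j ↔ j = u) : ∑ j, (if P j then f j else 0) = f u := by
  rw [Finset.sum_congr rfl (fun j _ => if_congr (h j) rfl rfl)]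
  simp [Finset.sum_ite_eq' Finset.univ u f]

lemma sum_ite_two (P : α → Prop) [DecidablePred P] (f : α → ℝ) (u v : α) (huv : u ≠ v)
    (h : ∀ j, P j ↔ j = u ∨ j = v) :
    ∑ j, (if P j then f j else 0) = f u + f v := by
  have step : ∀ j, (if P j then f j else 0)
      = (if j = u then f j else 0) + (if j = v then f j else 0) := by
    intro j
    by_cases h1 : j = u <;> by_cases h2 : j = v <;>
      simp_all [h j]
  rw [Finset.sum_congr rfl (fun j _ => step j), Finset.sum_add_distrib]
  simp [Finset.sum_ite_eq' Finset.univ]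

lemma sum_ite_three (P : α → Prop) [DecidablePred P] (f : α → ℝ) (u v w : α)
    (huv : u ≠ v) (huw : u ≠ w) (hvw : v ≠ w)
    (h : ∀ j, P j ↔ j = u ∨ j = v ∨ j = w) :
    ∑ j, (if P j then f j else 0) = f u + f v + f w := by
  have step : ∀ j, (if P j then f j else 0)
      = (if j = u then f j else 0) + (if j = v then f j else 0) + (if j = w then f j else 0) := by
    intro j
    by_cases h1 : j = u <;> by_cases h2 : j = v <;> by_cases h3 : j = w <;>
      simp_all [h j]
  rw [Finset.sum_congr rfl (fun j _ => step j), Finset.sum_add_distrib, Finset.sum_add_distrib]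
  simp [Finset.sum_ite_eq' Finset.univ]

end SumHelpers

/-- neighbor sum for the lollipop graph -/
noncomputable def Ssum (n r : ℕ) (x : Fin n → ℝ) (i : Fin n) : ℝ :=
  ∑ j, if (lollipop n r).Adj i j then (x i - x j) else 0

lemma lap_sub_one_mulVec {n r : ℕ} (x : Fin n → ℝ) (i : Fin n) :
    (((lollipop n r).lapMatrix ℝ - 1) *ᵥ x) i = Ssum n r x i - x i := by
  rw [Matrix.sub_mulVec, Pi.sub_apply, SimpleGraph.lapMatrix_mulVec_apply, Matrix.one_mulVec]
  congr 1
  rw [SimpleGraph.degree_eq_sum_if_adj (G := lollipop n r) (R := ℝ) i, SimpleGraph.neighborFinset_eq_filter,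
    Finset.sum_filter, Ssum, Finset.sum_mul, ← Finset.sum_sub_distrib]
  congr 1 with j
  by_cases h : (lollipop n r).Adj i j <;> simp [h]

section Elemmas
variable {n r : ℕ}

lemma Ssum_zero (h3 : 3 ≤ r) (hrn : r ≤ n) (x : Fin n → ℝ) :
    Ssum n r x ⟨0, by omega⟩ =
      (x ⟨0, by omega⟩ - x ⟨1, by omega⟩) + (x ⟨0, by omega⟩ - x ⟨r - 1, by omega⟩) := by
  rw [Ssum, sum_ite_two _ _ ⟨1, by omega⟩ ⟨r - 1, by omega⟩ ?hne ?hiff]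
  case hne => simp only [ne_eq, Fin.mk.injEq]; omega
  case hiff =>
    intro j
    have := j.isLt
    rw [lollipop_adj_iff h3]
    simp only [Fin.ext_iff, Fin.val_mk, true_and, and_true, false_and, and_false, zero_add, add_zero]
    omega

lemma Ssum_mid (h3 : 3 ≤ r) (hrn : r ≤ n) (x : Fin n → ℝ) (k : ℕ) (hk1 : 1 ≤ k)
    (hk2 : k ≤ n - 2) (hkr : k ≠ r - 1) :
    Ssum n r x ⟨k, by omega⟩ =
      (x ⟨k, by omega⟩ - x ⟨k - 1, by omega⟩) + (x ⟨k, by omega⟩ - x ⟨k + 1, by omega⟩) := by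
  rw [Ssum, sum_ite_two _ _ ⟨k - 1, by omega⟩ ⟨k + 1, by omega⟩ ?hne ?hiff]
  case hne => simp only [ne_eq, Fin.mk.injEq]; omega
  case hiff =>
    intro j
    have := j.isLt
    rw [lollipop_adj_iff h3]
    simp only [Fin.ext_iff, Fin.val_mk, true_and, and_true, false_and, and_false, zero_add, add_zero]
    omega

lemma Ssum_junction (h3 : 3 ≤ r) (hrn : r < n) (x : Fin n → ℝ) :
    Ssum n r x ⟨r - 1, by omega⟩ =
      (x ⟨r - 1, by omega⟩ - x ⟨r - 2, by omega⟩) + (x ⟨r - 1, by omega⟩ - x ⟨0, by omega⟩)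
        + (x ⟨r - 1, by omega⟩ - x ⟨r, by omega⟩) := by
  rw [Ssum, sum_ite_three _ _ ⟨r - 2, by omega⟩ ⟨0, by omega⟩ ⟨r, by omega⟩ ?h1 ?h2 ?h3 ?hiff]
  case h1 => simp only [ne_eq, Fin.mk.injEq]; omega
  case h2 => simp only [ne_eq, Fin.mk.injEq]; omega
  case h3 => simp only [ne_eq, Fin.mk.injEq]; omega
  case hiff =>
    intro j
    have := j.isLt
    rw [lollipop_adj_iff h3]
    simp only [Fin.ext_iff, Fin.val_mk, true_and, and_true, false_and, and_false, zero_add, add_zero]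
    omega

lemma Ssum_junction_end (h3 : 3 ≤ r) (hrn : r = n) (x : Fin n → ℝ) :
    Ssum n r x ⟨r - 1, by omega⟩ =
      (x ⟨r - 1, by omega⟩ - x ⟨r - 2, by omega⟩) + (x ⟨r - 1, by omega⟩ - x ⟨0, by omega⟩) := by
  rw [Ssum, sum_ite_two _ _ ⟨r - 2, by omega⟩ ⟨0, by omega⟩ ?hne ?hiff]
  case hne => simp only [ne_eq, Fin.mk.injEq]; omega
  case hiff =>
    intro j
    have := j.isLt
    rw [lollipop_adj_iff h3]
    simp only [Fin.ext_iff, Fin.val_mk, true_and, and_true, false_and, and_false, zero_add, add_zero]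
    omega

lemma Ssum_end (h3 : 3 ≤ r) (hrn : r < n) (x : Fin n → ℝ) :
    Ssum n r x ⟨n - 1, by omega⟩ = x ⟨n - 1, by omega⟩ - x ⟨n - 2, by omega⟩ := by
  rw [Ssum, sum_ite_one _ _ ⟨n - 2, by omega⟩ ?hiff]
  case hiff =>
    intro j
    have := j.isLt
    rw [lollipop_adj_iff h3]
    simp only [Fin.ext_iff, Fin.val_mk, true_and, and_true, false_and, and_false, zero_add, add_zero]
    omega

end Elemmas

/-- The period-6 sequence a, b, b-a, -a, -b, a-b, ... -/
noncomputable def cyc6 (a b : ℝ) (k : ℕ) : ℝ :=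
  match k % 6 with
  | 0 => a
  | 1 => b
  | 2 => b - a
  | 3 => -a
  | 4 => -b
  | _ => a - b

lemma cyc6_congr (a b : ℝ) {k l : ℕ} (h : k % 6 = l % 6) : cyc6 a b k = cyc6 a b l := by
  unfold cyc6
  rw [h]

lemma cyc6_rec (a b : ℝ) (k : ℕ) : cyc6 a b (k + 2) = cyc6 a b (k + 1) - cyc6 a b k := by
  have h : k % 6 = 0 ∨ k % 6 = 1 ∨ k % 6 = 2 ∨ k % 6 = 3 ∨ k % 6 = 4 ∨ k % 6 = 5 := by omega
  rcases h with h | h | h | h | h | h <;>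
    rw [cyc6_congr a b (show (k+2) % 6 = ((k%6)+2) % 6 by omega),
        cyc6_congr a b (show (k+1) % 6 = ((k%6)+1) % 6 by omega),
        cyc6_congr a b (show k % 6 = (k%6) % 6 by omega), h] <;>
    simp [cyc6] <;> ring

lemma cyc6_add (a b a' b' : ℝ) (k : ℕ) :
    cyc6 (a + a') (b + b') k = cyc6 a b k + cyc6 a' b' k := by
  have h : k % 6 = 0 ∨ k % 6 = 1 ∨ k % 6 = 2 ∨ k % 6 = 3 ∨ k % 6 = 4 ∨ k % 6 = 5 := by omega
  unfold cyc6
  rcases h with h | h | h | h | h | h <;> rw [h] <;> simp only [] <;> ring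

lemma cyc6_smul (c a b : ℝ) (k : ℕ) :
    cyc6 (c * a) (c * b) k = c * cyc6 a b k := by
  have h : k % 6 = 0 ∨ k % 6 = 1 ∨ k % 6 = 2 ∨ k % 6 = 3 ∨ k % 6 = 4 ∨ k % 6 = 5 := by omega
  unfold cyc6
  rcases h with h | h | h | h | h | h <;> rw [h] <;> simp only [] <;> ring

lemma cyc6_val (a b : ℝ) {k : ℕ} :
    (k % 6 = 0 → cyc6 a b k = a) ∧ (k % 6 = 1 → cyc6 a b k = b) ∧
    (k % 6 = 2 → cyc6 a b k = b - a) ∧ (k % 6 = 3 → cyc6 a b k = -a) ∧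
    (k % 6 = 4 → cyc6 a b k = -b) ∧ (k % 6 = 5 → cyc6 a b k = a - b) := by
  unfold cyc6
  refine ⟨fun h => by rw [h]; rfl, fun h => by rw [h]; rfl, fun h => by rw [h]; rfl,
    fun h => by rw [h]; rfl, fun h => by rw [h]; rfl, fun h => by rw [h]; rfl⟩

noncomputable def vf (n r : ℕ) (a b : ℝ) : Fin n → ℝ := fun i =>
  if (i : ℕ) < r then cyc6 a b i else (a - b) * cyc6 1 1 ((i : ℕ) + 1 - r)

lemma vf_tail {n r : ℕ} (h3 : 3 ≤ r) (h6 : 6 ∣ r) (a b : ℝ) (i : Fin n)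
    (hi : r - 1 ≤ (i : ℕ)) : vf n r a b i = (a - b) * cyc6 1 1 ((i : ℕ) + 1 - r) := by
  rcases lt_or_ge (i : ℕ) r with h | h
  · have hie : (i : ℕ) = r - 1 := by omega
    rw [vf, if_pos h]
    have h5 : (i : ℕ) % 6 = 5 := by omega
    rw [(cyc6_val a b).2.2.2.2.2 h5, show (i:ℕ) + 1 - r = 0 by omega,
      (cyc6_val 1 1).1 (by norm_num), mul_one]
  · rw [vf, if_neg (by omega)]

lemma vf_ker {n r : ℕ} (h3 : 3 ≤ r) (hrn : r ≤ n) (h6 : 6 ∣ r) (a b : ℝ)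
    (hc : 3 ∣ n ∨ a = b) (i : Fin n) :
    Ssum n r (vf n r a b) i = vf n r a b i := by
  have h6' : 6 ≤ r := by omega
  set x := vf n r a b with hx
  have hval : ∀ (k : ℕ) (hk : k < n), k < r → x ⟨k, hk⟩ = cyc6 a b k := by
    intro k hk hkr
    simp only [hx, vf, Fin.val_mk]
    rw [if_pos hkr]
  have htail : ∀ (k : ℕ) (hk : k < n), r - 1 ≤ k → x ⟨k, hk⟩ = (a - b) * cyc6 1 1 (k + 1 - r) :=
    fun k hk hge => vf_tail h3 h6 a b ⟨k, hk⟩ hge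
  obtain ⟨k, hk⟩ := i
  rcases (show k = 0 ∨ (1 ≤ k ∧ k ≤ r - 2) ∨ (k = r - 1 ∧ r < n) ∨ (k = r - 1 ∧ r = n)
      ∨ (r ≤ k ∧ k ≤ n - 2) ∨ (k = n - 1 ∧ r < n) from by omega)
    with h0 | ⟨hk1, hk2⟩ | ⟨hj, hjn⟩ | ⟨hj, hjn⟩ | ⟨hp1, hp2⟩ | ⟨he, hen⟩
  · subst h0
    rw [Ssum_zero h3 hrn, hval 0 (by omega) (by omega), hval 1 (by omega) (by omega),
      hval (r - 1) (by omega) (by omega), (cyc6_val a b).1 (by norm_num),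
      (cyc6_val a b).2.1 (by norm_num), (cyc6_val a b).2.2.2.2.2 (show (r - 1) % 6 = 5 by omega)]
    ring
  · rw [Ssum_mid h3 hrn x k hk1 (by omega) (by omega), hval k (by omega) (by omega),
      hval (k - 1) (by omega) (by omega), hval (k + 1) (by omega) (by omega)]
    have hr := cyc6_rec a b (k - 1)
    rw [show k - 1 + 2 = k + 1 from by omega, show k - 1 + 1 = k from by omega] at hr
    linarith
  · subst hj
    rw [Ssum_junction h3 hjn, hval (r - 1) (by omega) (by omega),
      hval (r - 2) (by omega) (by omega), hval 0 (by omega) (by omega),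
      htail r (by omega) (by omega), (cyc6_val a b).2.2.2.2.2 (show (r - 1) % 6 = 5 by omega),
      (cyc6_val a b).2.2.2.2.1 (show (r - 2) % 6 = 4 by omega), (cyc6_val a b).1 (by norm_num),
      show r + 1 - r = 1 from by omega, (cyc6_val 1 1).2.1 (by norm_num)]
    ring
  · subst hj
    rw [Ssum_junction_end h3 hjn, hval (r - 1) (by omega) (by omega),
      hval (r - 2) (by omega) (by omega), hval 0 (by omega) (by omega),
      (cyc6_val a b).2.2.2.2.2 (show (r - 1) % 6 = 5 by omega),
      (cyc6_val a b).2.2.2.2.1 (show (r - 2) % 6 = 4 by omega), (cyc6_val a b).1 (by norm_num)]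
    ring
  · rw [Ssum_mid h3 hrn x k (by omega) (by omega) (by omega),
      htail k (by omega) (by omega), htail (k - 1) (by omega) (by omega),
      htail (k + 1) (by omega) (by omega), show k - 1 + 1 - r = k - r from by omega]
    have hr := cyc6_rec 1 1 (k - r)
    rw [show k - r + 2 = k + 1 + 1 - r from by omega, show k - r + 1 = k + 1 - r from by omega] at hr
    rw [hr]
    ring
  · subst he
    rw [Ssum_end h3 hen, htail (n - 2) (by omega) (by omega),
      show n - 2 + 1 - r = n - 1 - r from by omega]
    rcases hc with hc | hc
    · rcases (show (n - 1 - r) % 6 = 2 ∨ (n - 1 - r) % 6 = 5 from by omega) with h | h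
      · rw [(cyc6_val 1 1).2.2.1 h]
        ring
      · rw [(cyc6_val 1 1).2.2.2.2.2 h]
        ring
    · rw [hc]
      ring

lemma vf_head {n r : ℕ} (a b : ℝ) (m : ℕ) (hm : m < n) (hmr : m < r) :
    vf n r a b ⟨m, hm⟩ = cyc6 a b m := by
  simp only [vf, Fin.val_mk]
  rw [if_pos hmr]

section Backward
variable {n r : ℕ} (h3 : 3 ≤ r) (hrn : r ≤ n) (x : Fin n → ℝ)
  (hx : ∀ i, Ssum n r x i = x i)

include h3 hrn hx

lemma step_mid (k : ℕ) (hk1 : 2 ≤ k) (hk2 : k ≤ n - 1) (hkr : k - 1 ≠ r - 1) :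
    x ⟨k, by omega⟩ = x ⟨k - 1, by omega⟩ - x ⟨k - 2, by omega⟩ := by
  have heq := hx ⟨k - 1, by omega⟩
  rw [Ssum_mid h3 hrn x (k - 1) (by omega) (by omega) hkr] at heq
  have e1 : x ⟨k - 1 + 1, by omega⟩ = x ⟨k, by omega⟩ := by
    congr 1 <;> simp only [Fin.ext_iff, Fin.val_mk] <;> omega
  have e2 : x ⟨k - 1 - 1, by omega⟩ = x ⟨k - 2, by omega⟩ := by
    congr 1 <;> simp only [Fin.ext_iff, Fin.val_mk] <;> omega
  rw [e1, e2] at heq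
  linarith

lemma step_junction (hrn' : r < n) :
    x ⟨r, by omega⟩ = 2 * x ⟨r - 1, by omega⟩ - x ⟨r - 2, by omega⟩ - x ⟨0, by omega⟩ := by
  have heq := hx ⟨r - 1, by omega⟩
  rw [Ssum_junction h3 hrn' x] at heq
  linarith

lemma step_end (hrn' : r < n) : x ⟨n - 2, by omega⟩ = 0 := by
  have heq := hx ⟨n - 1, by omega⟩
  rw [Ssum_end h3 hrn' x] at heq
  linarith

end Backward

lemma ker_is_vf {n r : ℕ} (h3 : 3 ≤ r) (hrn : r ≤ n) (h6 : 6 ∣ r) (x : Fin n → ℝ)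
    (hx : ∀ i, Ssum n r x i = x i) :
    x = vf n r (x ⟨0, by omega⟩) (x ⟨1, by omega⟩)
      ∧ (3 ∣ n ∨ x ⟨0, by omega⟩ = x ⟨1, by omega⟩) := by
  have h6' : 6 ≤ r := by omega
  set a := x ⟨0, by omega⟩ with ha
  set b := x ⟨1, by omega⟩ with hb
  have main : ∀ k, ∀ hk : k < n, x ⟨k, hk⟩ = vf n r a b ⟨k, hk⟩ := by
    intro k
    induction k using Nat.strong_induction_on with
    | _ k ih =>
      intro hk
      rcases (show k = 0 ∨ k = 1 ∨ (2 ≤ k ∧ k ≤ r - 1) ∨ (k = r ∧ r < n)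
          ∨ (r + 1 ≤ k ∧ k ≤ n - 1) from by omega)
        with h0 | h1 | ⟨hc1, hc2⟩ | ⟨hjr, hjn⟩ | ⟨hp1, hp2⟩
      · subst h0
        rw [vf_head a b 0 hk (by omega), (cyc6_val a b).1 (by norm_num), ha]
      · subst h1
        rw [vf_head a b 1 hk (by omega), (cyc6_val a b).2.1 (by norm_num), hb]
      · have hstep := step_mid h3 hrn x hx k hc1 (by omega) (by omega)
        have hv1 := ih (k - 1) (by omega) (by omega)
        have hv2 := ih (k - 2) (by omega) (by omega)
        rw [vf_head a b (k - 1) (by omega) (by omega)] at hv1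
        rw [vf_head a b (k - 2) (by omega) (by omega)] at hv2
        have hrec := cyc6_rec a b (k - 2)
        rw [show k - 2 + 2 = k from by omega, show k - 2 + 1 = k - 1 from by omega] at hrec
        rw [vf_head a b k hk (by omega), hrec]
        rw [hstep, hv1, hv2]
      · subst hjr
        have hstep := step_junction h3 hrn x hx hjn
        have hv1 := ih (k - 1) (by omega) (by omega)
        have hv2 := ih (k - 2) (by omega) (by omega)
        have hv0 := ih 0 (by omega) (by omega)
        rw [vf_head a b (k - 1) (by omega) (by omega),
          (cyc6_val a b).2.2.2.2.2 (show (k - 1) % 6 = 5 by omega)] at hv1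
        rw [vf_head a b (k - 2) (by omega) (by omega),
          (cyc6_val a b).2.2.2.2.1 (show (k - 2) % 6 = 4 by omega)] at hv2
        rw [vf_head a b 0 (by omega) (by omega), (cyc6_val a b).1 (by norm_num)] at hv0
        rw [vf_tail h3 h6 a b ⟨k, hk⟩ (by simp only [Fin.val_mk]; omega)]
        simp only [Fin.val_mk]
        rw [show k + 1 - k = 1 from by omega, (cyc6_val 1 1).2.1 (by norm_num), mul_one]
        rw [hstep, hv1, hv2, hv0]
        ring
      · have hstep := step_mid h3 hrn x hx k (by omega) (by omega) (by omega)
        have hv1 := ih (k - 1) (by omega) (by omega)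
        have hv2 := ih (k - 2) (by omega) (by omega)
        rw [vf_tail h3 h6 a b ⟨k - 1, by omega⟩ (by simp only [Fin.val_mk]; omega)] at hv1
        rw [vf_tail h3 h6 a b ⟨k - 2, by omega⟩ (by simp only [Fin.val_mk]; omega)] at hv2
        simp only [Fin.val_mk] at hv1 hv2
        rw [show k - 1 + 1 - r = k - r from by omega] at hv1
        rw [show k - 2 + 1 - r = k - 1 - r from by omega] at hv2
        rw [vf_tail h3 h6 a b ⟨k, hk⟩ (by simp only [Fin.val_mk]; omega)]
        simp only [Fin.val_mk]
        have hrec := cyc6_rec 1 1 (k - 1 - r)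
        rw [show k - 1 - r + 2 = k + 1 - r from by omega,
          show k - 1 - r + 1 = k - r from by omega] at hrec
        rw [hrec, hstep, hv1, hv2]
        ring
  constructor
  · funext i
    obtain ⟨k, hk⟩ := i
    exact main k hk
  · rcases eq_or_lt_of_le hrn with he | hlt
    · left
      omega
    · have h0 := step_end h3 hrn x hx hlt
      rw [main (n - 2) (by omega)] at h0
      rw [vf_tail h3 h6 a b ⟨n - 2, by omega⟩ (by simp only [Fin.val_mk]; omega)] at h0
      simp only [Fin.val_mk] at h0
      rw [show n - 2 + 1 - r = n - 1 - r from by omega] at h0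
      by_cases h3n : 3 ∣ n
      · left
        exact h3n
      · right
        rcases (show (n - 1 - r) % 6 = 0 ∨ (n - 1 - r) % 6 = 1 ∨ (n - 1 - r) % 6 = 3
            ∨ (n - 1 - r) % 6 = 4 from by omega) with h | h | h | h
        · rw [(cyc6_val 1 1).1 h] at h0
          linarith
        · rw [(cyc6_val 1 1).2.1 h] at h0
          linarith
        · rw [(cyc6_val 1 1).2.2.2.1 h] at h0
          norm_num at h0
          linarith
        · rw [(cyc6_val 1 1).2.2.2.2.1 h] at h0
          norm_num at h0
          linarith

noncomputable def psi2 (n r : ℕ) : (ℝ × ℝ) →ₗ[ℝ] (Fin n → ℝ) where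
  toFun p := vf n r p.1 p.2
  map_add' p q := by
    funext i
    simp only [vf, Pi.add_apply, Prod.fst_add, Prod.snd_add]
    by_cases h : (i : ℕ) < r
    · rw [if_pos h, if_pos h, if_pos h]
      exact cyc6_add _ _ _ _ _
    · rw [if_neg h, if_neg h, if_neg h]
      ring
  map_smul' c p := by
    funext i
    simp only [vf, Pi.smul_apply, Prod.smul_fst, Prod.smul_snd, RingHom.id_apply,
      smul_eq_mul]
    by_cases h : (i : ℕ) < r
    · rw [if_pos h, if_pos h]
      exact cyc6_smul _ _ _ _
    · rw [if_neg h, if_neg h]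
      ring

noncomputable def diagMap : ℝ →ₗ[ℝ] ℝ × ℝ where
  toFun c := (c, c)
  map_add' _ _ := rfl
  map_smul' _ _ := rfl

noncomputable def psi1 (n r : ℕ) : ℝ →ₗ[ℝ] (Fin n → ℝ) :=
  (psi2 n r).comp diagMap

lemma psi1_apply (n r : ℕ) (c : ℝ) : psi1 n r c = vf n r c c := by rfl
lemma psi2_apply (n r : ℕ) (a b : ℝ) : psi2 n r (a, b) = vf n r a b := by rfl

lemma finrank_ker_lollipop (n r : ℕ) (h3 : 3 ≤ r) (hrn : r ≤ n) (h6 : 6 ∣ r) :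
    Module.finrank ℝ
        (LinearMap.ker ((lollipop n r).lapMatrix ℝ - (1 : ℝ) • 1).mulVecLin)
      = if 3 ∣ n then 2 else 1 := by
  have hmem : ∀ x : Fin n → ℝ,
      x ∈ LinearMap.ker ((lollipop n r).lapMatrix ℝ - (1 : ℝ) • 1).mulVecLin
        ↔ ∀ i, Ssum n r x i = x i := by
    intro x
    rw [LinearMap.mem_ker, Matrix.mulVecLin_apply, one_smul, funext_iff]
    constructor
    · intro h i
      have h2 := h i
      rw [lap_sub_one_mulVec] at h2
      have h0 : (0 : Fin n → ℝ) i = 0 := rfl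
      rw [h0] at h2
      linarith
    · intro h i
      rw [lap_sub_one_mulVec, h i]
      simp
  by_cases h3n : 3 ∣ n
  · rw [if_pos h3n]
    have hker : LinearMap.ker ((lollipop n r).lapMatrix ℝ - (1 : ℝ) • 1).mulVecLin
        = LinearMap.range (psi2 n r) := by
      ext x
      rw [hmem, LinearMap.mem_range]
      constructor
      · intro h
        refine ⟨(x ⟨0, by omega⟩, x ⟨1, by omega⟩), ?_⟩
        rw [psi2_apply]
        exact ((ker_is_vf h3 hrn h6 x h).1).symm
      · rintro ⟨⟨a, b⟩, rfl⟩ i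
        rw [psi2_apply]
        exact vf_ker h3 hrn h6 a b (Or.inl h3n) i
    have hinj : Function.Injective (psi2 n r) := by
      intro p q h
      obtain ⟨a, b⟩ := p
      obtain ⟨c, d⟩ := q
      rw [psi2_apply, psi2_apply] at h
      have h0 := congrFun h ⟨0, by omega⟩
      have h1 := congrFun h ⟨1, by omega⟩
      rw [vf_head a b 0 (by omega) (by omega), vf_head c d 0 (by omega) (by omega),
        (cyc6_val a b).1 (by norm_num), (cyc6_val c d).1 (by norm_num)] at h0
      rw [vf_head a b 1 (by omega) (by omega), vf_head c d 1 (by omega) (by omega),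
        (cyc6_val a b).2.1 (by norm_num), (cyc6_val c d).2.1 (by norm_num)] at h1
      simp only [Prod.mk.injEq]
      exact ⟨h0, h1⟩
    rw [hker, LinearMap.finrank_range_of_inj hinj, Module.finrank_prod, Module.finrank_self]
  · rw [if_neg h3n]
    have hker : LinearMap.ker ((lollipop n r).lapMatrix ℝ - (1 : ℝ) • 1).mulVecLin
        = LinearMap.range (psi1 n r) := by
      ext x
      rw [hmem, LinearMap.mem_range]
      constructor
      · intro h
        obtain ⟨hvf, hcon⟩ := ker_is_vf h3 hrn h6 x h
        have hab : x ⟨0, by omega⟩ = x ⟨1, by omega⟩ := by tauto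
        refine ⟨x ⟨0, by omega⟩, ?_⟩
        rw [psi1_apply]
        conv_rhs => rw [hvf]
        rw [hab]
      · rintro ⟨c, rfl⟩ i
        rw [psi1_apply]
        exact vf_ker h3 hrn h6 c c (Or.inr rfl) i
    have hinj : Function.Injective (psi1 n r) := by
      intro p q h
      rw [psi1_apply, psi1_apply] at h
      have h0 := congrFun h ⟨0, by omega⟩
      rwa [vf_head p p 0 (by omega) (by omega), vf_head q q 0 (by omega) (by omega),
        (cyc6_val p p).1 (by norm_num), (cyc6_val q q).1 (by norm_num)] at h0
    rw [hker, LinearMap.finrank_range_of_inj hinj, Module.finrank_self]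

end Graph

/-- If `r ≡ 0 (mod 6)`, then `1` is a Laplacian eigenvalue of the lollipop graph `C_{n,r}`,
with multiplicity `2` if `n ≡ 0 (mod 3)` and multiplicity `1` otherwise. -/
theorem lollipop_eigenvalue_one_r_zero_mod_six (n r : ℕ) (h3 : 3 ≤ r) (hrn : r ≤ n)
    (h6 : 6 ∣ r) :
    (1 : ℝ) ∈ lapEigs (lollipop n r) ∧
      mEig (lollipop n r) 1 = (if 3 ∣ n then 2 else 1) := by
  have hlap : lapR (lollipop n r) = (lollipop n r).lapMatrix ℝ := lapR_eq _
  have hH : ((lollipop n r).lapMatrix ℝ).IsHermitian :=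
    (SimpleGraph.posSemidef_lapMatrix ℝ (lollipop n r)).1
  have hcount : mEig (lollipop n r) 1 = (if 3 ∣ n then 2 else 1) := by
    unfold mEig lapEigs
    rw [hlap, ← nullity_eq _ hH 1, finrank_ker_lollipop n r h3 hrn h6]
  refine ⟨?_, hcount⟩
  have hpos : 0 < Multiset.count (1 : ℝ) (lapEigs (lollipop n r)) := by
    have h2 := hcount
    unfold mEig at h2
    rw [h2]
    split <;> norm_num
  exact Multiset.count_pos.mp hpos
end
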